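/- arXiv:1802.00467 — 6 statements merged into one kernel-verified Lean document; each statement's English description precedes it below -/
import Mathlib

section
/- Let Γ be a metrically homogeneous graph of generic type with finite diameter δ ≥ 3 such that Γ^ρ is also a metrically homogeneous graph. Then the numerical parameters of Γ are K₁ = 1, K₂ = δ, C = 2δ+2, and C' = 2δ+3. -/
open SimpleGraph

section Defs

variable {V : Type*}

/-- A graph is *metrically homogeneous* if it is connected and every
distance-preserving map defined on a finite set of vertices extends to a
distance-preserving bijection of the whole vertex set (with respect to the
path metric). -/
def IsMetricallyHomogeneous (G : SimpleGraph V) : Prop :=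
  G.Connected ∧
  ∀ (s : Finset V) (f : V → V),
    (∀ x ∈ s, ∀ y ∈ s, G.dist (f x) (f y) = G.dist x y) →
    ∃ g : V ≃ V, (∀ x y : V, G.dist (g x) (g y) = G.dist x y) ∧ ∀ x ∈ s, g x = f x

/-- `δ` is the diameter of `G` (with respect to the path metric). -/
def HasDiameter (G : SimpleGraph V) (δ : ℕ) : Prop :=
  (∀ x y : V, G.dist x y ≤ δ) ∧ ∃ x y : V, G.dist x y = δ

/-- The set of (nonzero) distances realized in `G`. -/
def DistSet (G : SimpleGraph V) : Set ℕ :=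
  {n : ℕ | 0 < n ∧ ∃ x y : V, G.dist x y = n}

/-- `G` is of *generic type*: any two vertices at distance `2` have infinitely
many common neighbors forming an independent set, and the set of neighbors of
any fixed vertex (with the induced metric) carries no non-trivial equivalence
relation invariant under all of its self-isometries. -/
def GenericType (G : SimpleGraph V) : Prop :=
  (∀ x y : V, G.dist x y = 2 →
    {z : V | G.Adj x z ∧ G.Adj y z}.Infinite ∧
    ∀ z w : V, (G.Adj x z ∧ G.Adj y z) → (G.Adj x w ∧ G.Adj y w) → ¬ G.Adj z w) ∧
  ∀ v : V, ∀ r : G.neighborSet v → G.neighborSet v → Prop,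
    Equivalence r →
    (∀ g : G.neighborSet v ≃ G.neighborSet v,
      (∀ x y : G.neighborSet v, G.dist (g x : V) (g y : V) = G.dist (x : V) (y : V)) →
      ∀ x y : G.neighborSet v, r x y → r (g x) (g y)) →
    (∀ x y, r x y) ∨ (∀ x y, r x y → x = y)

/-- A triangle of type `(a,b,c)` is realized in `G`. -/
def RealizesTriangle (G : SimpleGraph V) (a b c : ℕ) : Prop :=
  ∃ x y z : V, G.dist x y = a ∧ G.dist y z = b ∧ G.dist x z = c

/-- `G` contains a triangle (three distinct vertices) of perimeter `p`. -/
def RealizesPerimeter (G : SimpleGraph V) (p : ℕ) : Prop :=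
  ∃ x y z : V, x ≠ y ∧ y ≠ z ∧ x ≠ z ∧ G.dist x y + G.dist y z + G.dist x z = p

/-- `k` is the parameter `K₁` of `G`: the least `m` such that a triangle of
type `(m,m,1)` is realized in `G`. -/
def IsK1 (G : SimpleGraph V) (k : ℕ) : Prop :=
  IsLeast {m : ℕ | RealizesTriangle G m m 1} k

/-- `k` is the parameter `K₂` of `G`: the greatest `m` such that a triangle of
type `(m,m,1)` is realized in `G`. -/
def IsK2 (G : SimpleGraph V) (k : ℕ) : Prop :=
  IsGreatest {m : ℕ | RealizesTriangle G m m 1} k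

/-- `c` is the parameter `C₀` of `G` (relative to the diameter `δ`): the least
even number greater than `2δ` such that no triangle of perimeter `c` occurs. -/
def IsC0 (G : SimpleGraph V) (δ c : ℕ) : Prop :=
  IsLeast {c' : ℕ | Even c' ∧ 2 * δ < c' ∧ ¬ RealizesPerimeter G c'} c

/-- `c` is the parameter `C₁` of `G` (relative to the diameter `δ`): the least
odd number greater than `2δ` such that no triangle of perimeter `c` occurs. -/
def IsC1 (G : SimpleGraph V) (δ c : ℕ) : Prop :=
  IsLeast {c' : ℕ | Odd c' ∧ 2 * δ < c' ∧ ¬ RealizesPerimeter G c'} c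

/-- `G` (of diameter `δ`) is antipodal: every vertex has a unique vertex at
distance `δ` from it. -/
def IsAntipodal (G : SimpleGraph V) (δ : ℕ) : Prop :=
  ∀ v : V, ∃! w : V, G.dist v w = δ

/-- `G` is bipartite. -/
def IsBipartiteGraph (G : SimpleGraph V) : Prop :=
  ∃ f : V → Bool, ∀ x y : V, G.Adj x y → f x ≠ f y

/-- `G` is complete multipartite: there is an equivalence relation such that
two vertices are adjacent exactly when they are inequivalent. -/
def IsCompleteMultipartiteGraph (G : SimpleGraph V) : Prop :=
  ∃ r : V → V → Prop, Equivalence r ∧ ∀ x y : V, G.Adj x y ↔ ¬ r x y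

/-- `G` is an `n`-cycle. -/
def IsNCycle (G : SimpleGraph V) (n : ℕ) : Prop :=
  ∃ e : V ≃ ZMod n, ∀ x y : V, G.Adj x y ↔ (e x - e y = 1 ∨ e y - e x = 1)

/-- The permutation `ρ` of `{1,…,δ}`. -/
def rhoFun (δ i : ℕ) : ℕ := if 2 * i ≤ δ then 2 * i else 2 * (δ - i) + 1

/-- The permutation `ρ⁻¹` of `{1,…,δ}`. -/
def rhoInvFun (δ i : ℕ) : ℕ := if Even i then i / 2 else δ - (i - 1) / 2

/-- The involution `τ_ε` of `{1,…,δ}`, for `ε = 0` or `1`. -/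
def tauFun (δ ε i : ℕ) : ℕ := if Odd (min i (δ + ε - i)) then δ + ε - i else i

/-- The `n`-cycle graph on `ZMod n`. -/
def zmodCycleGraph (n : ℕ) : SimpleGraph (ZMod n) where
  Adj x y := x ≠ y ∧ (x - y = 1 ∨ y - x = 1)
  symm := ⟨fun x y h => ⟨h.1.symm, h.2.symm⟩⟩
  loopless := ⟨fun x h => h.1 rfl⟩

end Defs

namespace NecRho

variable {V : Type*}

structure Setup (G H : SimpleGraph V) (δ : ℕ) : Prop where
  hδ : 3 ≤ δ
  hGc : G.Connected
  hHc : H.Connected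
  hhom : ∀ (s : Finset V) (f : V → V),
    (∀ x ∈ s, ∀ y ∈ s, G.dist (f x) (f y) = G.dist x y) →
    ∃ g : V ≃ V, (∀ x y : V, G.dist (g x) (g y) = G.dist x y) ∧ ∀ x ∈ s, g x = f x
  hdle : ∀ x y : V, G.dist x y ≤ δ
  hdiam : ∃ x y : V, G.dist x y = δ
  htw : ∀ x y : V, x ≠ y → H.dist x y = rhoFun δ (G.dist x y)
  hgen2 : ∀ x y : V, G.dist x y = 2 → {z : V | G.Adj x z ∧ G.Adj y z}.Infinite

variable {G H : SimpleGraph V} {δ : ℕ}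

lemma rho_low {i : ℕ} (h : 2 * i ≤ δ) : rhoFun δ i = 2 * i := if_pos h

lemma rho_high {i : ℕ} (h : δ < 2 * i) : rhoFun δ i = 2 * (δ - i) + 1 :=
  if_neg (by omega)

lemma Setup.dist_pos (S : Setup G H δ) {x y : V} (h : x ≠ y) : 1 ≤ G.dist x y :=
  S.hGc.pos_dist_of_ne h

lemma Setup.ne_of_dist (S : Setup G H δ) {x y : V} {n : ℕ} (h : G.dist x y = n)
    (hn : 1 ≤ n) : x ≠ y := by
  rintro rfl; rw [SimpleGraph.dist_self] at h; omega

lemma Setup.rho_ineq (S : Setup G H δ) {x y z : V} (hxy : x ≠ y) (hyz : y ≠ z)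
    (hxz : x ≠ z) :
    rhoFun δ (G.dist x z) ≤ rhoFun δ (G.dist x y) + rhoFun δ (G.dist y z) := by
  have h := S.hHc.dist_triangle (u := x) (v := y) (w := z)
  rwa [S.htw x z hxz, S.htw x y hxy, S.htw y z hyz] at h

/-- realized triangle: a pair `y z` at distance `i` and an apex `x`. -/
def Tri (G : SimpleGraph V) (i j k : ℕ) : Prop :=
  ∃ x y z : V, G.dist y z = i ∧ G.dist x y = j ∧ G.dist x z = k

lemma tri_swap {i j k : ℕ} (h : Tri G i j k) : Tri G i k j := by
  obtain ⟨x, y, z, h1, h2, h3⟩ := h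
  exact ⟨x, z, y, SimpleGraph.dist_comm.trans h1, h3, h2⟩

lemma tri_rot {i j k : ℕ} (h : Tri G i j k) : Tri G j k i := by
  obtain ⟨x, y, z, h1, h2, h3⟩ := h
  exact ⟨z, x, y, h2, SimpleGraph.dist_comm.trans h3, SimpleGraph.dist_comm.trans h1⟩

lemma Setup.tri_bounds (S : Setup G H δ) {i j k : ℕ} (h : Tri G i j k) :
    i ≤ δ ∧ j ≤ δ ∧ k ≤ δ := by
  obtain ⟨x, y, z, h1, h2, h3⟩ := h
  exact ⟨h1 ▸ S.hdle y z, h2 ▸ S.hdle x y, h3 ▸ S.hdle x z⟩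

lemma Setup.tri_ineq (S : Setup G H δ) {i j k : ℕ} (h : Tri G i j k) :
    i ≤ j + k ∧ j ≤ i + k ∧ k ≤ i + j := by
  obtain ⟨x, y, z, h1, h2, h3⟩ := h
  refine ⟨?_, ?_, ?_⟩
  · have := S.hGc.dist_triangle (u := y) (v := x) (w := z)
    rw [SimpleGraph.dist_comm (u := y) (v := x)] at this; omega
  · have := S.hGc.dist_triangle (u := x) (v := z) (w := y)
    rw [SimpleGraph.dist_comm (u := z) (v := y)] at this; omega
  · have := S.hGc.dist_triangle (u := x) (v := y) (w := z)
    omega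

lemma Setup.tri_rho (S : Setup G H δ) {i j k : ℕ} (h : Tri G i j k)
    (hi : 1 ≤ i) (hj : 1 ≤ j) (hk : 1 ≤ k) :
    rhoFun δ i ≤ rhoFun δ j + rhoFun δ k ∧ rhoFun δ j ≤ rhoFun δ i + rhoFun δ k ∧
      rhoFun δ k ≤ rhoFun δ i + rhoFun δ j := by
  obtain ⟨x, y, z, h1, h2, h3⟩ := h
  have hyz : y ≠ z := S.ne_of_dist h1 hi
  have hxy : x ≠ y := S.ne_of_dist h2 hj
  have hxz : x ≠ z := S.ne_of_dist h3 hk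
  refine ⟨?_, ?_, ?_⟩
  · have := S.rho_ineq (x := y) (y := x) (z := z) hxy.symm hxz hyz
    rwa [SimpleGraph.dist_comm (u := y) (v := x), h1, h2, h3] at this
  · have := S.rho_ineq (x := x) (y := z) (z := y) hxz hyz.symm hxy
    rw [SimpleGraph.dist_comm (u := z) (v := y), h2, h3, h1] at this
    omega
  · have := S.rho_ineq (x := x) (y := y) (z := z) hxy hyz hxz
    rw [h1, h2, h3] at this
    omega

/-- amalgamation over a pair -/
lemma Setup.amalg (S : Setup G H δ) {y z : V} {i j k : ℕ} (hyz : G.dist y z = i)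
    (hi : 1 ≤ i) (h : Tri G i j k) : ∃ x : V, G.dist x y = j ∧ G.dist x z = k := by
  classical
  obtain ⟨x', y', z', h1, h2, h3⟩ := h
  have hy'z' : y' ≠ z' := S.ne_of_dist h1 hi
  set f : V → V := fun w => if w = y' then y else if w = z' then z else w with hf
  have hfy : f y' = y := by simp [hf]
  have hfz : f z' = z := by
    simp only [hf]
    rw [if_neg (Ne.symm hy'z')]
    simp
  have hpres : ∀ a ∈ ({y', z'} : Finset V), ∀ b ∈ ({y', z'} : Finset V),
      G.dist (f a) (f b) = G.dist a b := by
    intro a ha b hb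
    simp only [Finset.mem_insert, Finset.mem_singleton] at ha hb
    rcases ha with rfl | rfl <;> rcases hb with rfl | rfl
    · rw [hfy]; simp [SimpleGraph.dist_self]
    · rw [hfy, hfz, hyz, h1]
    · rw [hfy, hfz, SimpleGraph.dist_comm (u := z) (v := y), hyz]
      exact (SimpleGraph.dist_comm.trans h1).symm
    · rw [hfz]; simp [SimpleGraph.dist_self]
  obtain ⟨g, hg, hgs⟩ := S.hhom {y', z'} f hpres
  refine ⟨g x', ?_, ?_⟩
  · have := hg x' y'
    rwa [hgs y' (by simp), hfy, h2] at this
  · have := hg x' z'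
    rwa [hgs z' (by simp), hfz, h3] at this

lemma walk_between {x y : V} (hGc : G.Connected) (p : G.Walk x y) :
    ∀ r : ℕ, r ≤ p.length → ∃ w : V, G.dist x w ≤ r ∧ G.dist w y ≤ p.length - r := by
  induction p with
  | nil =>
    intro r hr
    simp only [SimpleGraph.Walk.length_nil] at hr
    have : r = 0 := by omega
    subst this
    refine ⟨_, Nat.le_of_eq SimpleGraph.dist_self, ?_⟩
    rw [SimpleGraph.dist_self]
    omega
  | @cons a b c hadj q ih =>
    intro r hr
    cases r with
    | zero =>
      refine ⟨a, by simp [SimpleGraph.dist_self], ?_⟩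
      simpa using SimpleGraph.dist_le (SimpleGraph.Walk.cons hadj q)
    | succ r =>
      rw [SimpleGraph.Walk.length_cons] at hr
      obtain ⟨w, hw1, hw2⟩ := ih r (by omega)
      refine ⟨w, ?_, ?_⟩
      · have h1 : G.dist a b ≤ 1 := by
          simpa using SimpleGraph.dist_le hadj.toWalk
        have := hGc.dist_triangle (u := a) (v := b) (w := w)
        omega
      · rw [SimpleGraph.Walk.length_cons]; omega

lemma Setup.geo_mid (S : Setup G H δ) {x y : V} {n r : ℕ} (hxy : G.dist x y = n)
    (hr : r ≤ n) : ∃ w : V, G.dist x w = r ∧ G.dist w y = n - r := by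
  obtain ⟨p, hp⟩ := S.hGc.exists_walk_length_eq_dist x y
  obtain ⟨w, hw1, hw2⟩ := walk_between S.hGc p r (by omega)
  rw [hp, hxy] at hw2
  have htri := S.hGc.dist_triangle (u := x) (v := w) (w := y)
  exact ⟨w, by omega, by omega⟩

lemma Setup.dist_real (S : Setup G H δ) {r : ℕ} (hr : r ≤ δ) :
    ∃ x w : V, G.dist x w = r := by
  obtain ⟨x, y, hxy⟩ := S.hdiam
  obtain ⟨w, hw1, _⟩ := S.geo_mid (r := r) hxy hr
  exact ⟨x, w, hw1⟩

/-- split triangle: pair at distance `r+s` with a point at `(r, s)`. -/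
lemma Setup.tri_split (S : Setup G H δ) {r s : ℕ} (hrs : r + s ≤ δ) :
    Tri G (r + s) r s := by
  obtain ⟨A, B, hAB⟩ := S.dist_real (r := r + s) hrs
  obtain ⟨w, hw1, hw2⟩ := S.geo_mid (r := r) hAB (by omega)
  refine ⟨w, A, B, hAB, by rwa [SimpleGraph.dist_comm], by simpa using hw2⟩

lemma rho_delta (hδ : 1 ≤ δ) : rhoFun δ δ = 1 := by
  rw [rho_high (by omega)]
  omega

lemma rho_dm1 (hδ : 3 ≤ δ) : rhoFun δ (δ - 1) = 3 := by
  rw [rho_high (by omega)]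
  omega

lemma Setup.dist_eq_delta_of_rho_one (S : Setup G H δ) {x y : V} (hne : x ≠ y)
    (h : H.dist x y = 1) : G.dist x y = δ := by
  have h2 := S.htw x y hne
  rw [h] at h2
  have hle := S.hdle x y
  rcases le_or_gt (2 * G.dist x y) δ with hc | hc
  · rw [rho_low hc] at h2; omega
  · rw [rho_high hc] at h2; omega

/-- common `H`-neighbour of a `G`-edge: a point at `G`-distance `δ` from both. -/
lemma Setup.commonH (S : Setup G H δ) {v y : V} (h : G.dist v y = 1) :
    ∃ u : V, G.dist u v = δ ∧ G.dist u y = δ := by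
  have hne : v ≠ y := S.ne_of_dist h (by omega)
  have hH2 : H.dist v y = 2 := by
    rw [S.htw v y hne, h, rho_low (by have := S.hδ; omega)]
  obtain ⟨p, hp⟩ := S.hHc.exists_walk_length_eq_dist v y
  rw [hH2] at hp
  cases p with
  | nil => simp at hp
  | cons hadj q =>
    cases q with
    | nil => simp at hp
    | @cons b c d hadj2 q2 =>
      cases q2 with
      | nil =>
        rename_i u
        have h1 : H.dist v u = 1 := SimpleGraph.dist_eq_one_iff_adj.mpr hadj
        have h2 : H.dist u y = 1 := SimpleGraph.dist_eq_one_iff_adj.mpr hadj2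
        have d1 : G.dist v u = δ := S.dist_eq_delta_of_rho_one hadj.ne h1
        have d2 : G.dist u y = δ := S.dist_eq_delta_of_rho_one hadj2.ne h2
        exact ⟨u, SimpleGraph.dist_comm.trans d1, d2⟩
      | cons hadj3 q3 => simp [SimpleGraph.Walk.length_cons] at hp

lemma Setup.lemA1 (S : Setup G H δ) {i j k : ℕ} (h : Tri G i j k)
    (hbig : 2 * δ + 2 ≤ i + j + k) : δ + 1 ≤ 2 * i := by
  by_contra hlow
  have hlow' : 2 * i ≤ δ := by omega
  obtain ⟨hbi, hbj, hbk⟩ := S.tri_bounds h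
  have hδ := S.hδ
  have hi : 1 ≤ i := by
    by_contra hi0
    have hi0' : i = 0 := by omega
    obtain ⟨x, y, z, h1, h2, h3⟩ := h
    have : y = z := (S.hGc.dist_eq_zero_iff).mp (by omega)
    subst this
    rw [h2] at h3
    omega
  have hj : 1 ≤ j := by omega
  have hk : 1 ≤ k := by omega
  obtain ⟨I1, _, _⟩ := S.tri_rho h hi hj hk
  rw [rho_low hlow', rho_high (show δ < 2 * j by omega),
    rho_high (show δ < 2 * k by omega)] at I1
  omega

lemma Setup.lemA (S : Setup G H δ) {i j k : ℕ} (h : Tri G i j k)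
    (hbig : 2 * δ + 2 ≤ i + j + k) :
    δ + 1 ≤ 2 * i ∧ δ + 1 ≤ 2 * j ∧ δ + 1 ≤ 2 * k :=
  ⟨S.lemA1 h hbig, S.lemA1 (tri_rot h) (by omega), S.lemA1 (tri_rot (tri_rot h)) (by omega)⟩

lemma Setup.tri_geo1 (S : Setup G H δ) {s : ℕ} (hs : 1 ≤ s) (h1 : s + 1 ≤ δ) :
    Tri G s 1 (s + 1) := by
  have t := S.tri_split (r := 1) (s := s) (by omega)
  have t2 := tri_swap (tri_rot (tri_rot t))
  rwa [Nat.add_comm 1 s] at t2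

/-- escalation: a big triangle with `i < δ` yields a big one with base `i+1`. -/
lemma Setup.esc (S : Setup G H δ) {i j k : ℕ} (h : Tri G i j k)
    (hbig : 2 * δ + 2 ≤ i + j + k) (hilt : i < δ) :
    ∃ m : ℕ, 1 ≤ m ∧ j ≤ m + 1 ∧ Tri G (i + 1) m k := by
  have hδ := S.hδ
  obtain ⟨hAi, hAj, hAk⟩ := S.lemA h hbig
  obtain ⟨x, y, z, h1, h2, h3⟩ := h
  have hT : Tri G i 1 (i + 1) := S.tri_geo1 (by omega) (by omega)
  obtain ⟨R, hR1, hR2⟩ := S.amalg h1 (by omega) hT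
  have htri1 := S.hGc.dist_triangle (u := x) (v := R) (w := y)
  have htri2 := S.hGc.dist_triangle (u := x) (v := y) (w := R)
  rw [hR1, h2] at htri1
  rw [h2, SimpleGraph.dist_comm (u := y) (v := R), hR1] at htri2
  have hxR : x ≠ R := by
    rintro rfl
    rw [h2] at hR1
    omega
  have hm1 : 1 ≤ G.dist x R := S.dist_pos hxR
  exact ⟨G.dist x R, hm1, by omega, ⟨x, R, z, hR2, rfl, h3⟩⟩

lemma Setup.deltaST (S : Setup G H δ) {s t : ℕ} (h : Tri G δ s t)
    (hbig : 2 * δ + 2 ≤ δ + s + t) : s = t ∧ δ + 2 ≤ 2 * s := by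
  have hδ := S.hδ
  obtain ⟨_, hbs, hbt⟩ := S.tri_bounds h
  obtain ⟨_, hAs, hAt⟩ := S.lemA h hbig
  obtain ⟨_, I2, I3⟩ := S.tri_rho h (by omega) (by omega) (by omega)
  rw [rho_delta (by omega), rho_high (show δ < 2 * s by omega),
    rho_high (show δ < 2 * t by omega)] at I2 I3
  omega

lemma Setup.asc (S : Setup G H δ) {s : ℕ} (h : Tri G δ s s)
    (h2s : δ + 2 ≤ 2 * s) (hslt : s < δ) : Tri G δ (s + 1) (s + 1) := by
  have hδ := S.hδ
  obtain ⟨x, y, z, h1, h2, h3⟩ := h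
  obtain ⟨R, hR1, hR2⟩ := S.amalg h2 (by omega) (S.tri_geo1 (by omega) (by omega))
  have hRz : R ≠ z := by
    rintro rfl
    rw [SimpleGraph.dist_comm] at h3
    rw [h3] at hR1
    omega
  have hRy : R ≠ y := S.ne_of_dist hR2 (by omega)
  have hyz : y ≠ z := S.ne_of_dist h1 (by omega)
  have hbz : G.dist R z ≤ δ := S.hdle R z
  have htri1 := S.hGc.dist_triangle (u := R) (v := x) (w := z)
  have htri2 := S.hGc.dist_triangle (u := x) (v := R) (w := z)
  rw [hR1, h3] at htri1
  rw [h3, SimpleGraph.dist_comm (u := x) (v := R), hR1] at htri2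
  have I1 := S.rho_ineq (x := R) (y := y) (z := z) hRy hyz hRz
  have I2 := S.rho_ineq (x := R) (y := z) (z := y) hRz hyz.symm hRy
  rw [hR2, h1] at I1
  rw [hR2, SimpleGraph.dist_comm (u := z) (v := y), h1] at I2
  rw [rho_delta (by omega), rho_high (show δ < 2 * (s + 1) by omega)] at I1 I2
  have hm : G.dist R z = s + 1 := by
    rcases le_or_gt (2 * G.dist R z) δ with hc | hc
    · rw [rho_low hc] at I1 I2
      omega
    · rw [rho_high hc] at I1 I2
      omega
  exact ⟨R, y, z, h1, hR2, hm⟩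

lemma Setup.top (S : Setup G H δ) : ¬ Tri G δ δ δ := by
  intro h
  have hδ := S.hδ
  obtain ⟨x, y, z, h1, h2, h3⟩ := h
  have hT : Tri G δ 1 (δ - 1) := by
    have t := S.tri_split (r := 1) (s := δ - 1) (by omega)
    have e : 1 + (δ - 1) = δ := by omega
    rwa [e] at t
  obtain ⟨v, hv1, hv2⟩ := S.amalg h1 (by omega) hT
  have hvx : v ≠ x := by
    rintro rfl
    rw [h2] at hv1
    omega
  have hvz : v ≠ z := S.ne_of_dist hv2 (by omega)
  have hvy : v ≠ y := S.ne_of_dist hv1 (by omega)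
  have hxz : x ≠ z := S.ne_of_dist h3 (by omega)
  have hxy : x ≠ y := S.ne_of_dist h2 (by omega)
  have hyz : y ≠ z := S.ne_of_dist h1 (by omega)
  -- d(v,x) = δ - 1
  have hbm : G.dist v x ≤ δ := S.hdle v x
  have htri1 := S.hGc.dist_triangle (u := x) (v := v) (w := y)
  rw [h2, SimpleGraph.dist_comm (u := x) (v := v), hv1] at htri1
  have I1 := S.rho_ineq (x := v) (y := x) (z := z) hvx hxz hvz
  rw [hv2, h3, rho_dm1 (by omega), rho_delta (by omega)] at I1
  have hm : G.dist v x = δ - 1 := by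
    rcases le_or_gt (2 * G.dist v x) δ with hc | hc
    · rw [rho_low hc] at I1; omega
    · rw [rho_high hc] at I1; omega
  -- common H-neighbour of the edge (v,y)
  obtain ⟨u, huv, huy⟩ := S.commonH hv1
  have huz : u ≠ z := by
    intro he
    have : G.dist u v = δ - 1 := by rw [he, SimpleGraph.dist_comm]; exact hv2
    omega
  have hux : u ≠ x := by
    intro he
    have : G.dist u v = δ - 1 := by rw [he, SimpleGraph.dist_comm]; exact hm
    omega
  have huvne : u ≠ v := S.ne_of_dist huv (by omega)
  -- q = d(u,z) = 1
  have J1 := S.rho_ineq (x := u) (y := y) (z := z) (by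
    intro he; rw [he] at huy; rw [SimpleGraph.dist_self] at huy; omega) hyz huz
  rw [huy, h1, rho_delta (by omega)] at J1
  have J2 := S.rho_ineq (x := v) (y := u) (z := z) huvne.symm huz hvz
  rw [SimpleGraph.dist_comm (u := v) (v := u), huv, hv2, rho_dm1 (by omega),
    rho_delta (by omega)] at J2
  have hbq : G.dist u z ≤ δ := S.hdle u z
  have hq : G.dist u z = 1 := by
    rcases le_or_gt (2 * G.dist u z) δ with hc | hc
    · rw [rho_low hc] at J1 J2; omega
    · rw [rho_high hc] at J1 J2; omega
  -- r = d(u,x) : contradiction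
  have hbr : G.dist u x ≤ δ := S.hdle u x
  have htri3 := S.hGc.dist_triangle (u := x) (v := u) (w := z)
  rw [h3, SimpleGraph.dist_comm (u := x) (v := u), hq] at htri3
  have K1 := S.rho_ineq (x := v) (y := u) (z := x) huvne.symm hux hvx
  rw [SimpleGraph.dist_comm (u := v) (v := u), huv, rho_delta (by omega)] at K1
  rw [hm, rho_dm1 (by omega)] at K1
  have K2 := S.rho_ineq (x := u) (y := y) (z := x) (by
    intro he; rw [he] at huy; rw [SimpleGraph.dist_self] at huy; omega) hxy.symm hux
  rw [huy, SimpleGraph.dist_comm (u := y) (v := x), h2, rho_delta (by omega)] at K2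
  rcases le_or_gt (2 * G.dist u x) δ with hc | hc
  · rw [rho_low hc] at K1 K2; omega
  · rw [rho_high hc] at K1 K2; omega
/-- ascent to the equilateral triangle and contradiction. -/
lemma Setup.noDeltaSS (S : Setup G H δ) : ∀ n s, Tri G δ s s → δ + 2 ≤ 2 * s →
    δ ≤ s + n → False := by
  intro n
  induction n with
  | zero =>
    intro s h h2s hn
    have hb := (S.tri_bounds h).2.1
    have : s = δ := by omega
    subst this
    exact S.top h
  | succ n ih =>
    intro s h h2s hn
    by_cases hs : s = δ
    · subst hs; exact S.top h
    · have hb := (S.tri_bounds h).2.1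
      exact ih (s + 1) (S.asc h h2s (by omega)) (by omega) (by omega)

lemma Setup.noBigTop (S : Setup G H δ) {j k : ℕ} (h : Tri G δ j k)
    (hbig : 2 * δ + 2 ≤ δ + j + k) : False := by
  obtain ⟨hst, h2s⟩ := S.deltaST h hbig
  subst hst
  exact S.noDeltaSS (δ - j) j h h2s (by omega)

/-- MAIN: no realized triangle of perimeter `≥ 2δ+2`. -/
lemma Setup.noBig (S : Setup G H δ) {i j k : ℕ} (h : Tri G i j k)
    (hbig : 2 * δ + 2 ≤ i + j + k) : False := by
  obtain ⟨hbi, -, -⟩ := S.tri_bounds h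
  have key : ∀ n i j k, Tri G i j k → 2 * δ + 2 ≤ i + j + k → δ ≤ i + n → False := by
    intro n
    induction n with
    | zero =>
      intro i j k h hbig hn
      have hbi := (S.tri_bounds h).1
      have : i = δ := by omega
      subst this
      exact S.noBigTop h hbig
    | succ n ih =>
      intro i j k h hbig hn
      by_cases hi : i = δ
      · subst hi; exact S.noBigTop h hbig
      · have hbi := (S.tri_bounds h).1
        obtain ⟨m, hm1, hm2, hT⟩ := S.esc h hbig (by omega)
        exact ih (i + 1) m k hT (by omega) (by omega)
  exact key δ i j k h hbig (by omega)


lemma rho_le_delta (hδ : 1 ≤ δ) {i : ℕ} (hi : i ≤ δ) : rhoFun δ i ≤ δ := by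
  rcases le_or_gt (2 * i) δ with hc | hc
  · rw [rho_low hc]; omega
  · rw [rho_high hc]; omega

/-- the triangle `(1, δ, δ)` is realized. -/
lemma Setup.tri_dd1 (S : Setup G H δ) :
    ∃ a b u : V, G.dist a b = 1 ∧ G.dist u a = δ ∧ G.dist u b = δ := by
  have hδ := S.hδ
  obtain ⟨a, b, hab⟩ := S.dist_real (r := 1) (by omega)
  obtain ⟨u, hua, hub⟩ := S.commonH hab
  exact ⟨a, b, u, hab, hua, hub⟩

/-- two distinct vertices at distance `δ` from `u` are adjacent. -/
lemma Setup.sphere_adj (S : Setup G H δ) {u a b : V} (ha : G.dist u a = δ)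
    (hb : G.dist u b = δ) (hne : a ≠ b) : G.dist a b = 1 := by
  have hδ := S.hδ
  have hau : a ≠ u := (S.ne_of_dist ha (by omega)).symm
  have hub : u ≠ b := S.ne_of_dist hb (by omega)
  have I := S.rho_ineq (x := a) (y := u) (z := b) hau hub hne
  rw [SimpleGraph.dist_comm.trans ha, hb, rho_delta (by omega)] at I
  have hd : 1 ≤ G.dist a b := S.dist_pos hne
  have hdb : G.dist a b ≤ δ := S.hdle a b
  rcases le_or_gt (2 * G.dist a b) δ with hc | hc
  · rw [rho_low hc] at I; omega
  · rw [rho_high hc] at I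
    have : G.dist a b = δ := by omega
    exact absurd (⟨u, a, b, this, ha, hb⟩ : Tri G δ δ δ) S.top

lemma Setup.k1tri (S : Setup G H δ) : Tri G 1 1 1 := by
  classical
  have hδ := S.hδ
  by_cases h3 : ∃ u a b c : V, G.dist u a = δ ∧ G.dist u b = δ ∧ G.dist u c = δ ∧
      a ≠ b ∧ a ≠ c ∧ b ≠ c
  · obtain ⟨u, a, b, c, ha, hb, hc, hab, hac, hbc⟩ := h3
    exact ⟨a, b, c, S.sphere_adj hb hc hbc, S.sphere_adj ha hb hab, S.sphere_adj ha hc hac⟩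
  · exfalso
    push_neg at h3
    -- all δ-spheres have at most two elements
    have sphFin : ∀ u : V, {w : V | G.dist u w = δ}.Finite := by
      intro u
      by_cases hne : ∃ a, G.dist u a = δ
      · obtain ⟨a, haδ⟩ := hne
        by_cases hb : ∃ b, G.dist u b = δ ∧ b ≠ a
        · obtain ⟨b, hbδ, hba⟩ := hb
          refine Set.Finite.subset ((Set.finite_singleton b).insert a) ?_
          intro c hc
          simp only [Set.mem_setOf_eq] at hc
          simp only [Set.mem_insert_iff, Set.mem_singleton_iff]
          by_contra hcon
          push_neg at hcon
          exact hcon.2 (h3 u a b c haδ hbδ hc (Ne.symm hba) (Ne.symm hcon.1)).symm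
        · push_neg at hb
          refine Set.Finite.subset (Set.finite_singleton a) ?_
          intro c hc
          simp only [Set.mem_setOf_eq] at hc
          simp only [Set.mem_singleton_iff]
          exact hb c hc
      · push_neg at hne
        refine Set.Finite.subset (Set.finite_empty) ?_
        intro c hc
        exact absurd hc (hne c)
    -- H-balls are finite
    have ballFin : ∀ n : ℕ, ∀ u : V, {w : V | H.dist u w ≤ n}.Finite := by
      intro n
      induction n with
      | zero =>
        intro u
        refine Set.Finite.subset (Set.finite_singleton u) ?_
        intro w hw
        simp only [Set.mem_setOf_eq, Nat.le_zero] at hw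
        have := (S.hHc.dist_eq_zero_iff).mp hw
        simp [this.symm]
      | succ n ih =>
        intro u
        have hsub : {w : V | H.dist u w ≤ n + 1} ⊆
            {w : V | H.dist u w ≤ n} ∪ ⋃ v ∈ {w : V | H.dist u w ≤ n},
              {w : V | G.dist v w = δ} := by
          intro w hw
          simp only [Set.mem_setOf_eq] at hw
          by_cases hwn : H.dist u w ≤ n
          · exact Or.inl hwn
          · right
            obtain ⟨p, hp⟩ := S.hHc.exists_walk_length_eq_dist u w
            have hlen : p.reverse.length = n + 1 := by
              rw [SimpleGraph.Walk.length_reverse, hp]; omega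
            cases hq : p.reverse with
            | nil => rw [hq] at hlen; simp at hlen
            | @cons _ v' _ hadj q' =>
              rw [hq] at hlen
              rw [SimpleGraph.Walk.length_cons] at hlen
              have hv'u : H.dist u v' ≤ n := by
                have := SimpleGraph.dist_le q'
                rw [SimpleGraph.dist_comm (u := u) (v := v')]
                omega
              have hadj' : H.Adj v' w := hadj.symm
              have h1 : H.dist v' w = 1 := SimpleGraph.dist_eq_one_iff_adj.mpr hadj'
              have hδd : G.dist v' w = δ := S.dist_eq_delta_of_rho_one hadj'.ne h1
              exact Set.mem_biUnion hv'u hδd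
        exact Set.Finite.subset ((ih u).union ((ih u).biUnion (fun v _ => sphFin v))) hsub
    -- V is finite
    obtain ⟨x0, y0, _⟩ := S.hdiam
    have univFin : (Set.univ : Set V).Finite := by
      refine Set.Finite.subset (ballFin δ x0) ?_
      intro w _
      simp only [Set.mem_setOf_eq]
      by_cases hw : w = x0
      · subst hw; rw [SimpleGraph.dist_self]; omega
      · rw [S.htw x0 w (Ne.symm hw)]
        exact rho_le_delta (by omega) (S.hdle x0 w)
    -- but V is infinite
    obtain ⟨x, y, hxy⟩ := S.dist_real (r := 2) (by omega)
    exact S.hgen2 x y hxy (univFin.subset (Set.subset_univ _))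

end NecRho


/-- if `Γ^ρ` is metrically homogeneous then the numerical
parameters of `Γ` are `K₁ = 1`, `K₂ = δ`, `C = 2δ+2`, `C' = 2δ+3`. -/
theorem necessity_rho {V : Type*} (G H : SimpleGraph V) (δ : ℕ) (hδ : 3 ≤ δ)
    (hG : IsMetricallyHomogeneous G) (hgen : GenericType G)
    (hdiam : HasDiameter G δ)
    (hH : IsMetricallyHomogeneous H)
    (htw : ∀ x y : V, x ≠ y → H.dist x y = rhoFun δ (G.dist x y)) :
    IsK1 G 1 ∧ IsK2 G δ ∧
    ∃ c0 c1 : ℕ, IsC0 G δ c0 ∧ IsC1 G δ c1 ∧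
      min c0 c1 = 2 * δ + 2 ∧ max c0 c1 = 2 * δ + 3 := by
  classical
  obtain ⟨hGc, hGhom⟩ := hG
  obtain ⟨hHc, _hH2⟩ := hH
  have S : NecRho.Setup G H δ :=
    ⟨hδ, hGc, hHc, hGhom, hdiam.1, hdiam.2, htw, fun x y h => (hgen.1 x y h).1⟩
  have noPerim : ∀ p : ℕ, 2 * δ + 2 ≤ p → ¬ RealizesPerimeter G p := by
    rintro p hp ⟨x, y, z, hxy, hyz, hxz, hsum⟩
    have hT : NecRho.Tri G (G.dist y z) (G.dist x y) (G.dist x z) := ⟨x, y, z, rfl, rfl, rfl⟩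
    exact S.noBig hT (by omega)
  have k2tri : RealizesTriangle G δ δ 1 := by
    obtain ⟨a, b, u, hab, hua, hub⟩ := S.tri_dd1
    exact ⟨a, u, b, SimpleGraph.dist_comm.trans hua, hub, hab⟩
  have perim2d1 : RealizesPerimeter G (2 * δ + 1) := by
    obtain ⟨a, b, u, hab, hua, hub⟩ := S.tri_dd1
    have hau : G.dist a u = δ := SimpleGraph.dist_comm.trans hua
    refine ⟨a, u, b, (S.ne_of_dist hua (by omega)).symm, S.ne_of_dist hub (by omega),
      S.ne_of_dist hab (by omega), ?_⟩
    rw [hau, hub, hab]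
    omega
  refine ⟨?_, ?_, 2 * δ + 2, 2 * δ + 3, ?_, ?_, ?_, ?_⟩
  · constructor
    · obtain ⟨x, y, z, d1, d2, d3⟩ := S.k1tri
      exact ⟨x, y, z, d2, d1, d3⟩
    · rintro m ⟨x, y, z, e1, e2, e3⟩
      by_contra hm
      have hm0 : m = 0 := by omega
      subst hm0
      have hxy := (hGc.dist_eq_zero_iff).mp e1
      have hyz := (hGc.dist_eq_zero_iff).mp e2
      rw [hxy, hyz, SimpleGraph.dist_self] at e3
      omega
  · constructor
    · exact k2tri
    · rintro m ⟨x, y, z, e1, e2, e3⟩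
      exact e1 ▸ hdiam.1 x y
  · constructor
    · exact ⟨⟨δ + 1, by omega⟩, by omega, noPerim _ le_rfl⟩
    · rintro c' ⟨⟨e, he⟩, hgt, _⟩
      omega
  · constructor
    · exact ⟨⟨δ + 1, by omega⟩, by omega, noPerim _ (by omega)⟩
    · rintro c' ⟨⟨m', hm'⟩, hgt, hnr⟩
      by_contra hlt
      have hc' : c' = 2 * δ + 1 := by omega
      exact hnr (hc' ▸ perim2d1)
  · omega
  · omega
end

section
/- Let Γ be a bipartite metrically homogeneous graph of generic type with diameter δ ≥ 3 and let ε ∈ {0,1} be such that Γ^{τ_ε} is metrically homogeneous. Then δ ≡ ε (mod 2) and C₀ = 2(δ+ε)+2. -/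
open SimpleGraph

section NTaux








private lemma bool_ne_iff_nt {a b c : Bool} (h : a ≠ b) : (a = c) ↔ ¬ (b = c) := by
  cases a <;> cases b <;> cases c <;> simp_all

private lemma walk_parity_nt {V : Type*} {G : SimpleGraph V} {f : V → Bool}
    (hf : ∀ x y : V, G.Adj x y → f x ≠ f y) :
    ∀ {x y : V} (p : G.Walk x y), (f x = f y) ↔ Even p.length := by
  intro x y p
  induction p with
  | nil => simp
  | @cons x b y h q ih =>
    rw [SimpleGraph.Walk.length_cons, Nat.even_add_one, bool_ne_iff_nt (hf _ _ h), ih]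

private lemma dist_parity_nt {V : Type*} {G : SimpleGraph V} {f : V → Bool}
    (hc : G.Connected) (hf : ∀ x y : V, G.Adj x y → f x ≠ f y) (x y : V) :
    (f x = f y) ↔ Even (G.dist x y) := by
  obtain ⟨p, hp⟩ := hc.exists_walk_length_eq_dist x y
  rw [← hp]; exact walk_parity_nt hf p



private lemma exists_mid_nt {V : Type*} {G : SimpleGraph V} (hc : G.Connected) :
    ∀ (j : ℕ) (x y : V), j ≤ G.dist x y →
      ∃ z : V, G.dist x z = j ∧ G.dist z y = G.dist x y - j := by
  intro j
  induction j with
  | zero => intro x y _; exact ⟨x, SimpleGraph.dist_self, by simp⟩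
  | succ j ih =>
    intro x y hj
    obtain ⟨z, hxz, hzy⟩ := ih x y (by omega)
    have hzy0 : G.dist z y ≠ 0 := by omega
    obtain ⟨p, hp⟩ := SimpleGraph.exists_walk_of_dist_ne_zero hzy0
    cases p with
    | nil => simp at hp; omega
    | @cons _ w _ h q =>
      have hq : G.dist w y ≤ q.length := SimpleGraph.dist_le q
      have hzw : G.dist z w = 1 := SimpleGraph.dist_eq_one_iff_adj.mpr h
      have ht1 : G.dist z y ≤ G.dist z w + G.dist w y := hc.dist_triangle
      have ht2 : G.dist x w ≤ G.dist x z + G.dist z w := hc.dist_triangle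
      have ht3 : G.dist x y ≤ G.dist x w + G.dist w y := hc.dist_triangle
      simp only [SimpleGraph.Walk.length_cons] at hp
      exact ⟨w, by omega, by omega⟩

private lemma tau_odd_nt {δ ε d : ℕ} (hL : (δ + ε) % 2 = 0) (hd : d ≤ δ + ε)
    (hodd : d % 2 = 1) : tauFun δ ε d = δ + ε - d := by
  have h : Odd (min d (δ + ε - d)) := by
    rcases Nat.le_total d (δ + ε - d) with h | h
    · rw [Nat.min_eq_left h, Nat.odd_iff]; exact hodd
    · rw [Nat.min_eq_right h, Nat.odd_iff]; omega
  rw [tauFun, if_pos h]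

private lemma tau_even_nt {δ ε d : ℕ} (hL : (δ + ε) % 2 = 0) (hd : d ≤ δ + ε)
    (heven : d % 2 = 0) : tauFun δ ε d = d := by
  have h : ¬ Odd (min d (δ + ε - d)) := by
    rcases Nat.le_total d (δ + ε - d) with h | h
    · rw [Nat.min_eq_left h, Nat.odd_iff]; omega
    · rw [Nat.min_eq_right h, Nat.odd_iff]; omega
  rw [tauFun, if_neg h]

/-- there is a pair at each distance `j ≤ δ`. -/
private lemma exists_dist_pair_nt {V : Type*} {G : SimpleGraph V} {δ : ℕ} (hc : G.Connected)
    (hdiam : HasDiameter G δ) {j : ℕ} (hj : j ≤ δ) : ∃ u v : V, G.dist u v = j := by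
  obtain ⟨x, y, hxy⟩ := hdiam.2
  obtain ⟨z, hz, -⟩ := exists_mid_nt hc j x y (by omega)
  exact ⟨x, z, hz⟩

/-- geodesics extend: from a pair at distance `i < δ` one can move the second
point to distance `i+1` by a step. -/
private lemma exists_extend_nt {V : Type*} {G : SimpleGraph V} {δ : ℕ}
    (hG : IsMetricallyHomogeneous G) (hdiam : HasDiameter G δ)
    {i : ℕ} (hi1 : 1 ≤ i) (hiδ : i + 1 ≤ δ) {u v : V} (huv : G.dist u v = i) :
    ∃ m : V, G.dist v m = 1 ∧ G.dist u m = i + 1 := by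
  classical
  have hc := hG.1
  obtain ⟨x₀, t, hxt⟩ := exists_dist_pair_nt hc hdiam hiδ
  obtain ⟨w, hxw, hwt⟩ := exists_mid_nt hc i x₀ t (by omega)
  rw [hxt] at hwt
  have hwt1 : G.dist w t = 1 := by omega
  have hne : x₀ ≠ w := by
    intro h; rw [← h, SimpleGraph.dist_self] at hxw; omega
  set f : V → V := fun a => if a = x₀ then u else v with hf
  have hxw' : G.dist w x₀ = i := by rw [SimpleGraph.dist_comm]; exact hxw
  have hvu : G.dist v u = i := by rw [SimpleGraph.dist_comm]; exact huv
  have hcond : ∀ a ∈ ({x₀, w} : Finset V), ∀ b ∈ ({x₀, w} : Finset V),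
      G.dist (f a) (f b) = G.dist a b := by
    intro a ha b hb
    simp only [Finset.mem_insert, Finset.mem_singleton] at ha hb
    rcases ha with rfl | rfl <;> rcases hb with rfl | rfl <;>
      simp [hf, hne, Ne.symm hne, SimpleGraph.dist_self, hxw, huv, hxw', hvu]
  obtain ⟨g, hg, hgs⟩ := hG.2 {x₀, w} f hcond
  have hgx : g x₀ = u := by
    rw [hgs x₀ (by simp)]; simp [hf]
  have hgw : g w = v := by
    rw [hgs w (by simp)]; simp [hf, (Ne.symm hne)]
  refine ⟨g t, ?_, ?_⟩
  · rw [← hgw, hg w t, hwt1]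
  · rw [← hgx, hg x₀ t, hxt]

private lemma no_two_odd_nt {V : Type*} {G H : SimpleGraph V} {δ ε : ℕ}
    (hHc : H.Connected)
    (hdiam : ∀ x y : V, G.dist x y ≤ δ)
    (htw : ∀ x y : V, x ≠ y → H.dist x y = tauFun δ ε (G.dist x y))
    (hL : (δ + ε) % 2 = 0)
    {u v w : V}
    (hp : G.dist u v % 2 = 1) (hq : G.dist v w % 2 = 1) (hr : G.dist u w % 2 = 0)
    (hsum : 2 * (δ + ε) + 2 ≤ G.dist u v + G.dist v w + G.dist u w) : False := by
  have hpδ := hdiam u v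
  have hqδ := hdiam v w
  have hrδ := hdiam u w
  have huv : u ≠ v := by rintro rfl; rw [SimpleGraph.dist_self] at hp; omega
  have hvw : v ≠ w := by rintro rfl; rw [SimpleGraph.dist_self] at hq; omega
  by_cases huw : u = w
  · subst huw
    have h0 : G.dist u u = 0 := SimpleGraph.dist_self
    have h2 : G.dist v u = G.dist u v := SimpleGraph.dist_comm
    omega
  · have h1 := htw u v huv
    have h2 := htw v w hvw
    have h3 := htw u w huw
    rw [tau_odd_nt hL (by omega) hp] at h1
    rw [tau_odd_nt hL (by omega) hq] at h2
    rw [tau_even_nt hL (by omega) hr] at h3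
    have htri : H.dist u w ≤ H.dist u v + H.dist v w := hHc.dist_triangle
    omega

private lemma no_all_even_nt {V : Type*} {G H : SimpleGraph V} {δ ε : ℕ} {f : V → Bool}
    (hG : IsMetricallyHomogeneous G) (hHc : H.Connected)
    (hdiam : HasDiameter G δ)
    (hpar : ∀ x y : V, (f x = f y) ↔ Even (G.dist x y))
    (htw : ∀ x y : V, x ≠ y → H.dist x y = tauFun δ ε (G.dist x y))
    (hL : (δ + ε) % 2 = 0)
    {x y z : V} (hxy : x ≠ y) (hyz : y ≠ z)
    (ha : G.dist x y % 2 = 0) (hb : G.dist y z % 2 = 0) (hc0 : G.dist x z % 2 = 0)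
    (hbδ : G.dist y z < δ)
    (hsum : G.dist x y + G.dist y z + G.dist x z = 2 * (δ + ε) + 2) : False := by
  have hGc := hG.1
  have hb1 : 0 < G.dist y z := hGc.pos_dist_of_ne hyz
  have ha1 : 0 < G.dist x y := hGc.pos_dist_of_ne hxy
  have hzy : G.dist z y = G.dist y z := SimpleGraph.dist_comm
  obtain ⟨m, hym, hzm⟩ := exists_extend_nt hG hdiam (by omega) (by omega) hzy
  have hfym : ¬ (f y = f m) := by rw [hpar, hym]; simp
  have hfxy : f x = f y := (hpar x y).mpr (Nat.even_iff.mpr ha)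
  have hfxm : ¬ (f x = f m) := fun h => hfym (by rw [← hfxy]; exact h)
  have hdm_odd : G.dist x m % 2 = 1 := by
    have h5 : ¬ (G.dist x m % 2 = 0) :=
      fun hh => hfxm ((hpar x m).mpr (Nat.even_iff.mpr hh))
    omega
  have hmy : G.dist m y = 1 := by rw [SimpleGraph.dist_comm]; exact hym
  have hmz : G.dist m z = G.dist y z + 1 := by rw [SimpleGraph.dist_comm]; exact hzm
  have htri2 : G.dist x y ≤ G.dist x m + G.dist m y := hGc.dist_triangle
  exact no_two_odd_nt hHc hdiam.1 htw hL hdm_odd (by omega) hc0 (by omega)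

private lemma walk_const_nt {V : Type*} {G : SimpleGraph V} {f : V → Bool}
    (hsame : ∀ x y : V, G.Adj x y → f x = f y) :
    ∀ {x y : V} (_ : G.Walk x y), f x = f y := by
  intro x y p
  induction p with
  | nil => rfl
  | cons h q ih => rw [hsame _ _ h]; exact ih


end NTaux

/-- if `Γ` is bipartite of generic type and `Γ^{τ_ε}` is
metrically homogeneous, then `δ ≡ ε (mod 2)` and `C₀ = 2(δ+ε)+2`. -/
theorem necessity_tau_bipartite {V : Type*} (G H : SimpleGraph V) (δ ε : ℕ)
    (hδ : 3 ≤ δ) (hε : ε ≤ 1)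
    (hG : IsMetricallyHomogeneous G) (hgen : GenericType G)
    (hbip : IsBipartiteGraph G)
    (hdiam : HasDiameter G δ)
    (hH : IsMetricallyHomogeneous H)
    (htw : ∀ x y : V, x ≠ y → H.dist x y = tauFun δ ε (G.dist x y)) :
    δ % 2 = ε ∧ IsC0 G δ (2 * (δ + ε) + 2) := by
  classical
  obtain ⟨f, hf⟩ := hbip
  have hGc := hG.1
  have hHc := hH.1
  have hpar : ∀ x y : V, (f x = f y) ↔ Even (G.dist x y) := dist_parity_nt hGc hf
  -- every H-edge joins vertices at G-distance δ + ε - 1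
  have hedge : ∀ x y : V, H.Adj x y → G.dist x y = δ + ε - 1 := by
    intro x y hxy
    have hne : x ≠ y := hxy.ne
    have h1 : H.dist x y = 1 := SimpleGraph.dist_eq_one_iff_adj.mpr hxy
    have h2 := htw x y hne
    rw [h1] at h2
    have hd1 : 0 < G.dist x y := hGc.pos_dist_of_ne hne
    have hdδ : G.dist x y ≤ δ := hdiam.1 x y
    simp only [tauFun] at h2
    split_ifs at h2 with hcond
    · omega
    · exfalso
      apply hcond
      have hm : min (G.dist x y) (δ + ε - G.dist x y) = 1 := by omega
      rw [hm]; exact odd_one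
  -- δ + ε is even
  have hL : (δ + ε) % 2 = 0 := by
    by_contra hLodd
    have hsame : ∀ x y : V, H.Adj x y → f x = f y := by
      intro x y hxy
      rw [hpar, Nat.even_iff, hedge x y hxy]; omega
    have hconst : ∀ x y : V, f x = f y := by
      intro x y
      obtain ⟨p⟩ := hHc.preconnected x y
      exact walk_const_nt hsame p
    obtain ⟨u, v, huv⟩ := exists_dist_pair_nt hGc hdiam (show 1 ≤ δ by omega)
    have hne : ¬ (f u = f v) := by rw [hpar, Nat.even_iff, huv]; omega
    exact hne (hconst u v)
  have hδε : δ % 2 = ε := by omega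
  -- the perimeter 2(δ+ε)+2 is not realized
  have hnoP : ¬ RealizesPerimeter G (2 * (δ + ε) + 2) := by
    rintro ⟨x, y, z, hxy, hyz, hxz, hsum⟩
    have ha1 : 0 < G.dist x y := hGc.pos_dist_of_ne hxy
    have hb1 : 0 < G.dist y z := hGc.pos_dist_of_ne hyz
    have hc1 : 0 < G.dist x z := hGc.pos_dist_of_ne hxz
    have haδ := hdiam.1 x y
    have hbδ := hdiam.1 y z
    have hcδ := hdiam.1 x z
    have e1 := hpar x y
    have e2 := hpar y z
    have e3 := hpar x z
    rw [Nat.even_iff] at e1 e2 e3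
    have c1 : G.dist z y = G.dist y z := SimpleGraph.dist_comm
    have c2 : G.dist y x = G.dist x y := SimpleGraph.dist_comm
    have c3 : G.dist z x = G.dist x z := SimpleGraph.dist_comm
    by_cases pa : G.dist x y % 2 = 0 <;> by_cases pb : G.dist y z % 2 = 0 <;>
      by_cases pc : G.dist x z % 2 = 0
    -- (even, even, even)
    · by_cases h1 : G.dist y z < δ
      · exact no_all_even_nt hG hHc hdiam hpar htw hL hxy hyz pa pb pc h1 hsum
      · by_cases h2 : G.dist x y < δ
        · refine no_all_even_nt hG hHc hdiam hpar htw hL (x := z) (y := y) (z := x)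
            hyz.symm (Ne.symm hxy) (by rw [c1]; exact pb) (by rw [c2]; exact pa)
            (by rw [c3]; exact pc) (by rw [c2]; exact h2) (by rw [c1, c2, c3]; omega)
        · by_cases h3 : G.dist x z < δ
          · refine no_all_even_nt hG hHc hdiam hpar htw hL (x := y) (y := x) (z := z)
              (Ne.symm hxy) hxz (by rw [c2]; exact pa) pc pb h3 (by rw [c2]; omega)
          · omega
    -- (even, even, odd) : impossible parity
    · exfalso
      have q1 : f x = f y := e1.mpr pa
      have q2 : f y = f z := e2.mpr pb
      exact pc (e3.mp (q1.trans q2))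
    -- (even, odd, even) : impossible parity
    · exfalso
      have q1 : f x = f y := e1.mpr pa
      have q3 : f x = f z := e3.mpr pc
      exact pb (e2.mp (q1.symm.trans q3))
    -- (even, odd, odd) : two odd sides b, c with common vertex z
    · exact no_two_odd_nt hHc hdiam.1 htw hL (u := x) (v := z) (w := y)
        (by omega) (by rw [c1]; omega) pa (by rw [c1]; omega)
    -- (odd, even, even) : impossible parity
    · exfalso
      have q2 : f y = f z := e2.mpr pb
      have q3 : f x = f z := e3.mpr pc
      exact pa (e1.mp (q3.trans q2.symm))
    -- (odd, even, odd) : two odd sides a, c with common vertex x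
    · exact no_two_odd_nt hHc hdiam.1 htw hL (u := y) (v := x) (w := z)
        (by rw [c2]; omega) (by omega) pb (by rw [c2]; omega)
    -- (odd, odd, even) : two odd sides a, b with common vertex y
    · exact no_two_odd_nt hHc hdiam.1 htw hL (u := x) (v := y) (w := z)
        (by omega) (by omega) pc (by omega)
    -- (odd, odd, odd) : impossible parity
    · exfalso
      have q1 : ¬ f x = f y := fun h => pa (e1.mp h)
      have q2 : ¬ f y = f z := fun h => pb (e2.mp h)
      have q3 : ¬ f x = f z := fun h => pc (e3.mp h)
      cases hx : f x <;> cases hy : f y <;> cases hz : f z <;> simp_all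
  refine ⟨hδε, ⟨⟨δ + ε + 1, by ring⟩, by omega, hnoP⟩, ?_⟩
  -- lower bound
  rintro c' ⟨⟨k, hk⟩, hgt, hnr⟩
  by_contra hlt
  push_neg at hlt
  have hε1 : ε = 1 := by omega
  have hc' : c' = 2 * δ + 2 := by omega
  apply hnr
  obtain ⟨p0, r0, hpr⟩ := exists_dist_pair_nt hGc hdiam (show 2 ≤ δ by omega)
  have hpr_ne : p0 ≠ r0 := by rintro rfl; rw [SimpleGraph.dist_self] at hpr; omega
  have hH2 : H.dist p0 r0 = 2 := by
    rw [htw p0 r0 hpr_ne, hpr, tau_even_nt hL (by omega) (by omega)]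
  obtain ⟨q, hq1, hq2⟩ := exists_mid_nt hHc 1 p0 r0 (by omega)
  rw [hH2] at hq2
  have hq2' : H.dist q r0 = 1 := by omega
  have hp0q : p0 ≠ q := by rintro rfl; rw [SimpleGraph.dist_self] at hq1; omega
  have hqr0 : q ≠ r0 := by rintro rfl; rw [SimpleGraph.dist_self] at hq2'; omega
  have key : ∀ u w : V, u ≠ w → H.dist u w = 1 → G.dist u w = δ := by
    intro u w hne h1
    have h2 := htw u w hne
    rw [h1] at h2
    have hd1 : 0 < G.dist u w := hGc.pos_dist_of_ne hne
    have hdδ : G.dist u w ≤ δ := hdiam.1 u w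
    simp only [tauFun] at h2
    split_ifs at h2 with hcond
    · omega
    · exfalso
      apply hcond
      have hm : min (G.dist u w) (δ + ε - G.dist u w) = 1 := by omega
      rw [hm]; exact odd_one
  exact ⟨p0, q, r0, hp0q, hqr0, hpr_ne,
    by rw [key p0 q hp0q hq1, key q r0 hqr0 hq2', hpr]; omega⟩
end

section
/- Let Γ be a metrically homogeneous graph of generic type with diameter δ ≥ 3 such that Γ^{τ₀} is metrically homogeneous, and suppose moreover that Γ is not bipartite. Then Γ is antipodal, and its numerical parameters satisfy K₁ = ⌊δ/2⌋ and K₂ = ⌈δ/2⌉. -/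
open SimpleGraph

namespace MHT

/-- tauFun with explicit mod-2 condition. -/
lemma tau_eq_ite (δ i : ℕ) : tauFun δ 0 i = if min i (δ - i) % 2 = 1 then δ - i else i := by
  unfold tauFun
  simp [Nat.odd_iff]

lemma tau_le {δ i : ℕ} (h : i ≤ δ) : tauFun δ 0 i ≤ δ := by
  rw [tau_eq_ite]; split_ifs <;> omega

lemma tau_pos {δ i : ℕ} (h1 : 1 ≤ i) (h2 : i ≤ δ) : 1 ≤ tauFun δ 0 i := by
  rw [tau_eq_ite]; split_ifs with h <;> omega

lemma tau_invol {δ i : ℕ} (h : i ≤ δ) : tauFun δ 0 (tauFun δ 0 i) = i := by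
  have hi := tau_eq_ite δ i
  by_cases hm : min i (δ - i) % 2 = 1
  · rw [if_pos hm] at hi; rw [hi, tau_eq_ite]; split_ifs <;> omega
  · rw [if_neg hm] at hi; rw [hi, tau_eq_ite]; split_ifs <;> omega

lemma tau_pair {δ i : ℕ} (h : i ≤ δ) : tauFun δ 0 i + tauFun δ 0 (δ - i) = δ := by
  rw [tau_eq_ite, tau_eq_ite]; split_ifs with h1 h2 h2 <;> omega

lemma tau_zero (δ : ℕ) : tauFun δ 0 0 = 0 := by
  rw [tau_eq_ite]; split_ifs <;> omega

lemma tau_one {δ : ℕ} (h : 2 ≤ δ) : tauFun δ 0 1 = δ - 1 := by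
  rw [tau_eq_ite]; split_ifs with h1 <;> omega

lemma tau_two {δ : ℕ} (h : 4 ≤ δ) : tauFun δ 0 2 = 2 := by
  rw [tau_eq_ite]; split_ifs with h1 <;> omega

lemma tau_dm1 {δ : ℕ} (h : 2 ≤ δ) : tauFun δ 0 (δ - 1) = 1 := by
  rw [tau_eq_ite]; split_ifs with h1 <;> omega

lemma tau_delta (δ : ℕ) : tauFun δ 0 δ = δ := by
  rw [tau_eq_ite]; split_ifs <;> omega

lemma tau_three_le {δ : ℕ} (h : 4 ≤ δ) : tauFun δ 0 3 ≤ δ - 2 := by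
  rw [tau_eq_ite]; split_ifs with h1 <;> omega

/-- min-odd case. -/
lemma tau_of_odd {δ i : ℕ} (h : min i (δ - i) % 2 = 1) : tauFun δ 0 i = δ - i := by
  rw [tau_eq_ite, if_pos h]

lemma tau_of_even {δ i : ℕ} (h : min i (δ - i) % 2 = 0) : tauFun δ 0 i = i := by
  rw [tau_eq_ite, if_neg (by omega)]

variable {V : Type*}

/-- one step along a geodesic. -/
lemma step_lemma (K : SimpleGraph V) (hK : K.Connected) {x y : V} (h : K.dist x y ≠ 0) :
    ∃ x', K.Adj x x' ∧ K.dist x' y + 1 = K.dist x y := by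
  obtain ⟨p, hp⟩ := SimpleGraph.exists_walk_of_dist_ne_zero h
  cases p with
  | nil => simp at h
  | cons hadj q =>
    rename_i x'
    refine ⟨x', hadj, ?_⟩
    have h1 : K.dist x' y ≤ q.length := SimpleGraph.dist_le q
    have h2 : K.dist x x' = 1 := SimpleGraph.dist_eq_one_iff_adj.mpr hadj
    have h3 : K.dist x y ≤ K.dist x x' + K.dist x' y := hK.dist_triangle
    simp only [SimpleGraph.Walk.length_cons] at hp
    omega

/-- a vertex at prescribed distances on a geodesic. -/
lemma geodesic_point (K : SimpleGraph V) (hK : K.Connected) {x y : V} (i k : ℕ)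
    (h : K.dist x y = i + k) : ∃ u, K.dist x u = i ∧ K.dist u y = k := by
  induction i generalizing x with
  | zero => exact ⟨x, by simp, by simpa using h⟩
  | succ i ih =>
    have h0 : K.dist x y ≠ 0 := by omega
    obtain ⟨x', hadj, hstep⟩ := step_lemma K hK h0
    obtain ⟨u, hu1, hu2⟩ := ih (x := x') (by omega)
    refine ⟨u, ?_, hu2⟩
    have hxx' : K.dist x x' = 1 := SimpleGraph.dist_eq_one_iff_adj.mpr hadj
    have t1 : K.dist x u ≤ K.dist x x' + K.dist x' u := hK.dist_triangle
    have t2 : K.dist x y ≤ K.dist x u + K.dist u y := hK.dist_triangle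
    omega


/-- Bundled hypotheses. -/
structure Ctx {V : Type*} (G H : SimpleGraph V) (δ : ℕ) : Prop where
  hδ : 3 ≤ δ
  conG : G.Connected
  homG : ∀ (s : Finset V) (f : V → V),
    (∀ x ∈ s, ∀ y ∈ s, G.dist (f x) (f y) = G.dist x y) →
    ∃ g : V ≃ V, (∀ x y : V, G.dist (g x) (g y) = G.dist x y) ∧ ∀ x ∈ s, g x = f x
  gen : GenericType G
  diam_le : ∀ x y, G.dist x y ≤ δ
  diam_ex : ∃ x y, G.dist x y = δ
  conH : H.Connected
  htw : ∀ x y, x ≠ y → H.dist x y = tauFun δ 0 (G.dist x y)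

variable {G H : SimpleGraph V} {δ : ℕ}

namespace Ctx

variable (C : Ctx G H δ)
include C

lemma dpos {x y : V} (h : x ≠ y) : 0 < G.dist x y := C.conG.pos_dist_of_ne h

omit C in
lemma ne_of_dist {x y : V} {k : ℕ} (h : G.dist x y = k) (hk : 0 < k) : x ≠ y := by
  rintro rfl; rw [SimpleGraph.dist_self] at h; omega

lemma tri (x y z : V) : G.dist x z ≤ G.dist x y + G.dist y z := C.conG.dist_triangle

lemma dG_of_dH {x y : V} (h : x ≠ y) : G.dist x y = tauFun δ 0 (H.dist x y) := by
  rw [C.htw x y h, tau_invol (C.diam_le x y)]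

lemma dH_le (x y : V) : H.dist x y ≤ δ := by
  by_cases h : x = y
  · subst h; simp [SimpleGraph.dist_self]
  · rw [C.htw x y h]; exact tau_le (C.diam_le x y)

/-- the H-triangle inequality expressed via τ and G-distances. -/
lemma triH {x y z : V} (hxy : x ≠ y) (hyz : y ≠ z) :
    tauFun δ 0 (G.dist x z) ≤ tauFun δ 0 (G.dist x y) + tauFun δ 0 (G.dist y z) := by
  by_cases hxz : x = z
  · subst hxz; rw [SimpleGraph.dist_self, tau_zero]; exact Nat.zero_le _
  · rw [← C.htw x y hxy, ← C.htw y z hyz, ← C.htw x z hxz]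
    exact C.conH.dist_triangle

/-- transport: given a pair (a',b') with a point p', and a pair (a,b) at the same distance,
there is a point p in the same relative position to (a,b). -/
lemma transport {a b : V} (a' b' p' : V) (h'ab : a' ≠ b')
    (hd : G.dist a' b' = G.dist a b) :
    ∃ p, G.dist a p = G.dist a' p' ∧ G.dist b p = G.dist b' p' := by
  classical
  have hba : ¬ b' = a' := fun h => h'ab h.symm
  have hcond : ∀ x ∈ ({a', b'} : Finset V), ∀ y ∈ ({a', b'} : Finset V),
      G.dist ((fun t => if t = a' then a else b) x)
             ((fun t => if t = a' then a else b) y) = G.dist x y := by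
    intro x hx y hy
    simp only [Finset.mem_insert, Finset.mem_singleton] at hx hy
    rcases hx with rfl | rfl <;> rcases hy with rfl | rfl
    · simp [SimpleGraph.dist_self]
    · simp only [if_neg hba, eq_self_iff_true, if_true]
      exact hd.symm
    · simp only [if_neg hba, eq_self_iff_true, if_true]
      rw [SimpleGraph.dist_comm (u := b) (v := a), ← hd]
      exact SimpleGraph.dist_comm
    · simp [SimpleGraph.dist_self]
  obtain ⟨g, hg, hfix⟩ := C.homG {a', b'} _ hcond
  have ha : g a' = a := by
    have := hfix a' (by simp); simpa using this
  have hb : g b' = b := by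
    have := hfix b' (by simp)
    simp only [if_neg hba] at this; exact this
  exact ⟨g p', by rw [← ha]; exact hg a' p', by rw [← hb]; exact hg b' p'⟩

/-- every vertex has a vertex at distance δ. -/
lemma exists_far (v : V) : ∃ w, G.dist v w = δ := by
  classical
  obtain ⟨X, Y, hXY⟩ := C.diam_ex
  have hcond : ∀ x ∈ ({X} : Finset V), ∀ y ∈ ({X} : Finset V),
      G.dist ((fun _ => v) x) ((fun _ => v) y) = G.dist x y := by
    intro x hx y hy
    simp only [Finset.mem_singleton] at hx hy
    subst hx; subst hy; simp [SimpleGraph.dist_self]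
  obtain ⟨g, hg, hfix⟩ := C.homG {X} _ hcond
  refine ⟨g Y, ?_⟩
  have hX : g X = v := hfix X (by simp)
  rw [← hX, hg, hXY]


omit C in
lemma ne_of_dist' {K : SimpleGraph V} {x y : V} {k : ℕ} (h : K.dist x y = k) (hk : 0 < k) :
    x ≠ y := by
  rintro rfl; rw [SimpleGraph.dist_self] at h; omega

omit C in
/-- if `τ g ≥ δ - 1` then `g = 1` or `g = δ`. -/
lemma eq_one_or_delta {g : ℕ} (hδ : 2 ≤ δ) (hg : g ≤ δ) (h : δ - 1 ≤ tauFun δ 0 g) :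
    g = 1 ∨ g = δ := by
  have h1 := tau_le hg
  have h2 := tau_invol hg
  rcases (by omega : tauFun δ 0 g = δ - 1 ∨ tauFun δ 0 g = δ) with he | he
  · left; rw [he, tau_dm1 hδ] at h2; omega
  · right; rw [he, tau_delta] at h2; omega

/-- no triangle (δ,δ,1), for δ ≥ 4. -/
lemma noA (h4 : 4 ≤ δ) {v w w' : V}
    (h1 : G.dist v w = δ) (h2 : G.dist v w' = δ) (h3 : G.dist w w' = 1) : False := by
  obtain ⟨x1, hadj1, hx1⟩ := step_lemma G C.conG (x := v) (y := w) (by omega)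
  obtain ⟨x2, hadj2, hx2⟩ := step_lemma G C.conG (x := x1) (y := w) (by omega)
  have dvx1 : G.dist v x1 = 1 := SimpleGraph.dist_eq_one_iff_adj.mpr hadj1
  have dx1x2 : G.dist x1 x2 = 1 := SimpleGraph.dist_eq_one_iff_adj.mpr hadj2
  have dx1w : G.dist x1 w = δ - 1 := by omega
  have dx2w : G.dist x2 w = δ - 2 := by omega
  have dvx2 : G.dist v x2 = 2 := by
    have t1 := C.tri v x1 x2
    have t2 := C.tri v x2 w
    omega
  have hg1le : G.dist x1 w' ≤ δ := C.diam_le _ _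
  have hg1ge : δ - 1 ≤ G.dist x1 w' := by have := C.tri v x1 w'; omega
  have hg1 : G.dist x1 w' = δ := by
    rcases (by omega : G.dist x1 w' = δ - 1 ∨ G.dist x1 w' = δ) with he | he
    · exfalso
      have hH := C.triH (x := w) (y := x1) (z := w')
        (ne_of_dist' dx1w (by omega)).symm (ne_of_dist' he (by omega))
      rw [h3, SimpleGraph.dist_comm (u := w) (v := x1), dx1w, he,
        tau_one (by omega), tau_dm1 (by omega)] at hH
      omega
    · exact he
  have hg2 : G.dist x2 w' = δ - 1 := by
    have t1 := C.tri x1 x2 w'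
    have t2 := C.tri x2 w w'
    have := C.diam_le x2 w'
    omega
  have hH := C.triH (x := v) (y := x2) (z := w')
    (ne_of_dist' dvx2 (by omega)) (ne_of_dist' hg2 (by omega))
  rw [h2, dvx2, hg2, tau_delta, tau_two h4, tau_dm1 (by omega)] at hH
  omega

/-- no triangle (δ,δ,δ), given (δ,δ,1)-freeness. -/
lemma noC (hA : ∀ v w w' : V, G.dist v w = δ → G.dist v w' = δ → G.dist w w' = 1 → False)
    {v w w' : V}
    (h1 : G.dist v w = δ) (h2 : G.dist v w' = δ) (h3 : G.dist w w' = δ) : False := by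
  have hδ := C.hδ
  have hww' : w' ≠ w := (ne_of_dist' h3 (by omega)).symm
  have hH3 : H.dist w' w = δ := by
    rw [C.htw w' w hww', SimpleGraph.dist_comm (u := w') (v := w), h3, tau_delta]
  obtain ⟨z, hadj, hz⟩ := step_lemma H C.conH (x := w') (y := w) (by omega)
  have hw'z : H.dist w' z = 1 := SimpleGraph.dist_eq_one_iff_adj.mpr hadj
  have hzw : H.dist z w = δ - 1 := by omega
  have dzw : G.dist z w = 1 := by
    rw [C.dG_of_dH (ne_of_dist' hzw (by omega)), hzw, tau_dm1 (by omega)]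
  have dw'z : G.dist w' z = δ - 1 := by
    rw [C.dG_of_dH hadj.ne, hw'z, tau_one (by omega)]
  have hvz_ge : δ - 1 ≤ G.dist v z := by have := C.tri v z w; omega
  have hvz_ne : v ≠ z := by intro he; rw [← he] at dzw; omega
  have hzw'_ne : z ≠ w' := by intro he; rw [he] at hzw; omega
  have hH := C.triH (x := v) (y := z) (z := w') hvz_ne hzw'_ne
  rw [h2, SimpleGraph.dist_comm (u := z) (v := w'), dw'z, tau_delta, tau_dm1 (by omega)] at hH
  have := eq_one_or_delta (by omega) (C.diam_le v z) (by omega)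
  rcases this with he | he
  · omega
  · exact hA v w z h1 he ((SimpleGraph.dist_comm (u := w) (v := z)).trans dzw)

/-- no triangle (δ,δ,2), for δ ≥ 4, given (δ,δ,1)-freeness. -/
lemma noB (h4 : 4 ≤ δ)
    (hA : ∀ v w w' : V, G.dist v w = δ → G.dist v w' = δ → G.dist w w' = 1 → False)
    {v w w' : V}
    (h1 : G.dist v w = δ) (h2 : G.dist v w' = δ) (h3 : G.dist w w' = 2) : False := by
  obtain ⟨X, Y, hXY⟩ := C.diam_ex
  obtain ⟨u3, hu3X, hu3Y⟩ := geodesic_point G C.conG 3 (δ - 3) (by rw [hXY]; omega)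
  obtain ⟨u1, hu1X, hu1u3⟩ := geodesic_point G C.conG 1 2 (by rw [hu3X])
  obtain ⟨p, hp1, hp2⟩ := C.transport (a := w) (b := w') u1 u3 X
    (ne_of_dist' hu1u3 (by omega)) (by rw [hu1u3, h3])
  rw [SimpleGraph.dist_comm (u := u1) (v := X), hu1X] at hp1
  rw [SimpleGraph.dist_comm (u := u3) (v := X), hu3X] at hp2
  have hp1' : G.dist p w = 1 := (SimpleGraph.dist_comm (u := p) (v := w)).trans hp1
  have he_ge : δ - 1 ≤ G.dist v p := by have := C.tri v p w; omega
  have hple := C.diam_le v p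
  have he : G.dist v p = δ - 1 := by
    rcases (by omega : G.dist v p = δ - 1 ∨ G.dist v p = δ) with he | he
    · exact he
    · exact absurd (hA v w p h1 he hp1) (by simp)
  have hH := C.triH (x := v) (y := p) (z := w')
    (ne_of_dist' he (by omega)) (ne_of_dist' hp2 (by omega)).symm
  rw [h2, he, SimpleGraph.dist_comm (u := p) (v := w'), hp2, tau_delta,
    tau_dm1 (by omega)] at hH
  have := tau_three_le h4
  omega

/-- no triangle (δ,δ,δ-1), for δ ≥ 4, given (δ,δ,2)-freeness. -/
lemma noA' (h4 : 4 ≤ δ)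
    (hB : ∀ v w w' : V, G.dist v w = δ → G.dist v w' = δ → G.dist w w' = 2 → False)
    {v w w' : V}
    (h1 : G.dist v w = δ) (h2 : G.dist v w' = δ) (h3 : G.dist w w' = δ - 1) : False := by
  have hvw : v ≠ w := ne_of_dist' h1 (by omega)
  have hvw' : v ≠ w' := ne_of_dist' h2 (by omega)
  have hww' : w ≠ w' := ne_of_dist' h3 (by omega)
  have Hvw : H.dist v w = δ := by rw [C.htw v w hvw, h1, tau_delta]
  have Hvw' : H.dist v w' = δ := by rw [C.htw v w' hvw', h2, tau_delta]
  have Hww' : H.dist w w' = 1 := by rw [C.htw w w' hww', h3, tau_dm1 (by omega)]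
  obtain ⟨y1, hadj1, hy1⟩ := step_lemma H C.conH (x := v) (y := w) (by omega)
  obtain ⟨y2, hadj2, hy2⟩ := step_lemma H C.conH (x := y1) (y := w) (by omega)
  have Hvy1 : H.dist v y1 = 1 := SimpleGraph.dist_eq_one_iff_adj.mpr hadj1
  have Hy1y2 : H.dist y1 y2 = 1 := SimpleGraph.dist_eq_one_iff_adj.mpr hadj2
  have Hy1w : H.dist y1 w = δ - 1 := by omega
  have Hy2w : H.dist y2 w = δ - 2 := by omega
  have Hvy2 : H.dist v y2 = 2 := by
    have t1 := C.conH.dist_triangle (u := v) (v := y1) (w := y2)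
    have t2 := C.conH.dist_triangle (u := v) (v := y2) (w := w)
    omega
  have Hg1_ge : δ - 1 ≤ H.dist y1 w' := by
    have := C.conH.dist_triangle (u := v) (v := y1) (w := w')
    omega
  have Hg1 : H.dist y1 w' = δ := by
    have hle := C.dH_le y1 w'
    rcases (by omega : H.dist y1 w' = δ - 1 ∨ H.dist y1 w' = δ) with he | he
    · exfalso
      have d1 : G.dist y1 w = 1 := by
        rw [C.dG_of_dH (ne_of_dist' (K := H) Hy1w (by omega)), Hy1w, tau_dm1 (by omega)]
      have d2 : G.dist y1 w' = 1 := by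
        rw [C.dG_of_dH (ne_of_dist' (K := H) he (by omega)), he, tau_dm1 (by omega)]
      have := C.tri w y1 w'
      rw [h3, SimpleGraph.dist_comm (u := w) (v := y1), d1, d2] at this
      omega
    · exact he
  have Hg2 : H.dist y2 w' = δ - 1 := by
    have t1 := C.conH.dist_triangle (u := y1) (v := y2) (w := w')
    have t2 := C.conH.dist_triangle (u := y2) (v := w) (w := w')
    have := C.dH_le y2 w'
    omega
  have d3 : G.dist v y2 = 2 := by
    rw [C.dG_of_dH (ne_of_dist' (K := H) Hvy2 (by omega)), Hvy2, tau_two h4]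
  have d4 : G.dist y2 w' = 1 := by
    rw [C.dG_of_dH (ne_of_dist' (K := H) Hg2 (by omega)), Hg2, tau_dm1 (by omega)]
  have := C.tri v y2 w'
  rw [h2, d3, d4] at this
  omega

/-- full uniqueness for δ ≥ 4. -/
lemma E1ge4 (h4 : 4 ≤ δ) {v w w' : V}
    (h1 : G.dist v w = δ) (h2 : G.dist v w' = δ) (hne : w ≠ w') : False := by
  have hA : ∀ v w w' : V, G.dist v w = δ → G.dist v w' = δ → G.dist w w' = 1 → False :=
    fun a b c ha hb hc => C.noA h4 ha hb hc
  have hB : ∀ v w w' : V, G.dist v w = δ → G.dist v w' = δ → G.dist w w' = 2 → False :=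
    fun a b c ha hb hc => C.noB h4 hA ha hb hc
  have hj1 : 1 ≤ G.dist w w' := C.dpos hne
  have hjδ : G.dist w w' ≤ δ := C.diam_le _ _
  obtain ⟨x, hxv, hxw⟩ := geodesic_point G C.conG (δ - 1) 1 (by rw [h1]; omega)
  have hvx_ne : v ≠ x := by
    intro he; rw [← he, SimpleGraph.dist_self] at hxv; omega
  have hxw'_ne : x ≠ w' := by
    intro he; rw [he] at hxv; omega
  have hH := C.triH (x := v) (y := x) (z := w') hvx_ne hxw'_ne
  rw [h2, hxv, tau_delta, tau_dm1 (by omega)] at hH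
  have hg := eq_one_or_delta (δ := δ) (by omega) (C.diam_le x w') (by omega)
  rcases hg with hg | hg
  · -- j ≤ 2
    have := C.tri w x w'
    rw [SimpleGraph.dist_comm (u := w) (v := x), hxw, hg] at this
    rcases (by omega : G.dist w w' = 1 ∨ G.dist w w' = 2) with hj | hj
    · exact hA v w w' h1 h2 hj
    · exact hB v w w' h1 h2 hj
  · -- j ≥ δ - 1
    have := C.tri x w w'
    rw [hg, hxw] at this
    rcases (by omega : G.dist w w' = δ - 1 ∨ G.dist w w' = δ) with hj | hj
    · exact C.noA' h4 hB h1 h2 hj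
    · exact C.noC hA h1 h2 hj


omit C in
lemma tau_either (δ i : ℕ) : tauFun δ 0 i = i ∨ tauFun δ 0 i = δ - i := by
  rw [tau_eq_ite]; split_ifs <;> simp

/-- no (2,2,3) triangle when δ = 3. -/
lemma no223 (h3 : δ = 3) {a b c : V}
    (hab : G.dist a b = 2) (hbc : G.dist b c = 2) (hac : G.dist a c = 3) : False := by
  subst h3
  have hH := C.triH (x := a) (y := b) (z := c)
    (ne_of_dist' hab (by omega)) (ne_of_dist' hbc (by omega))
  rw [hab, hbc, hac, (by decide : tauFun 3 0 3 = 3), (by decide : tauFun 3 0 2 = 1)] at hH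
  omega

/-- no triangle (3,3,1) when δ = 3. -/
lemma noA3 (h3 : δ = 3) {v w w' : V}
    (h1 : G.dist v w = δ) (h2 : G.dist v w' = δ) (hj : G.dist w w' = 1) : False := by
  subst h3
  obtain ⟨u2, hu2v, hu2w⟩ := geodesic_point G C.conG 2 1 (by rw [h1])
  obtain ⟨z, hz⟩ := (C.gen.1 v u2 hu2v).1.nonempty
  simp only [Set.mem_setOf_eq] at hz
  have dvz : G.dist v z = 1 := SimpleGraph.dist_eq_one_iff_adj.mpr hz.1
  have dzu2 : G.dist z u2 = 1 := by
    rw [SimpleGraph.dist_comm]; exact SimpleGraph.dist_eq_one_iff_adj.mpr hz.2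
  have dzw : G.dist z w = 2 := by
    have t1 := C.tri z u2 w
    have t2 := C.tri v z w
    omega
  obtain ⟨t, ht, t', ht', htne⟩ := (C.gen.1 z w dzw).1.nontrivial
  simp only [Set.mem_setOf_eq] at ht ht'
  have key : ∀ s : V, G.Adj z s → G.Adj w s → G.dist v s = 2 ∧ G.dist s w' = 1 := by
    intro s hzs hws
    have dzs : G.dist z s = 1 := SimpleGraph.dist_eq_one_iff_adj.mpr hzs
    have dsw : G.dist s w = 1 := by
      rw [SimpleGraph.dist_comm]; exact SimpleGraph.dist_eq_one_iff_adj.mpr hws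
    have dvs : G.dist v s = 2 := by
      have t1 := C.tri v z s
      have t2 := C.tri v s w
      omega
    refine ⟨dvs, ?_⟩
    have t3 := C.tri s w w'
    have t4 := C.tri v s w'
    rcases (by omega : G.dist s w' = 1 ∨ G.dist s w' = 2) with he | he
    · exact he
    · exact absurd (C.no223 rfl dvs he h2) (fun h => h)
  obtain ⟨dvt, dtw'⟩ := key t ht.1 ht.2
  obtain ⟨dvt', dt'w'⟩ := key t' ht'.1 ht'.2
  have hnadj : ¬ G.Adj t t' := (C.gen.1 z w dzw).2 t t' ht ht'
  have dtw : G.dist t w = 1 := by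
    rw [SimpleGraph.dist_comm]; exact SimpleGraph.dist_eq_one_iff_adj.mpr ht.2
  have dwt' : G.dist w t' = 1 := SimpleGraph.dist_eq_one_iff_adj.mpr ht'.2
  have dtt' : G.dist t t' = 2 := by
    have t1 := C.tri t w t'
    have hne01 : G.dist t t' ≠ 1 := fun h => hnadj (SimpleGraph.dist_eq_one_iff_adj.mp h)
    have hpos := C.dpos htne
    omega
  exact (C.gen.1 t t' dtt').2 w w'
    ⟨ht.2.symm, ht'.2.symm⟩
    ⟨SimpleGraph.dist_eq_one_iff_adj.mp dtw', SimpleGraph.dist_eq_one_iff_adj.mp dt'w'⟩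
    (SimpleGraph.dist_eq_one_iff_adj.mp hj)

/-- no triangle (3,3,2) when δ = 3, given a triangle (1,1,1). -/
lemma noB3 (h3 : δ = 3) (h111 : RealizesTriangle G 1 1 1) {v w w'' : V}
    (h1 : G.dist v w = δ) (h2 : G.dist v w'' = δ) (hj : G.dist w w'' = 2) : False := by
  subst h3
  obtain ⟨u, hu⟩ := (C.gen.1 w w'' hj).1.nonempty
  simp only [Set.mem_setOf_eq] at hu
  have dwu : G.dist w u = 1 := SimpleGraph.dist_eq_one_iff_adj.mpr hu.1
  have dw''u : G.dist w'' u = 1 := SimpleGraph.dist_eq_one_iff_adj.mpr hu.2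
  have duw : G.dist u w = 1 := (SimpleGraph.dist_comm (u := u) (v := w)).trans dwu
  have duv : G.dist v u = 2 := by
    have t1 := C.tri v u w
    have t2 := C.tri v w u
    have hle := C.diam_le v u
    rcases (by omega : G.dist v u = 2 ∨ G.dist v u = 3) with he | he
    · exact he
    · exact absurd (C.noA3 rfl h1 he dwu) (fun h => h)
  obtain ⟨a, b, cc, hab, hbcc, hacc⟩ := h111
  obtain ⟨c, hc1, hc2⟩ := C.transport (a := w) (b := u) a cc b
    (ne_of_dist' hacc (by omega)) (by rw [hacc, dwu])
  rw [hab] at hc1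
  have hc2' : G.dist u c = 1 := by
    rw [hc2, SimpleGraph.dist_comm]; exact hbcc
  have hcw : G.dist c w = 1 := (SimpleGraph.dist_comm (u := c) (v := w)).trans hc1
  have dcv : G.dist v c = 2 := by
    have t1 := C.tri v c w
    have t2 := C.tri v u c
    have hle := C.diam_le v c
    rcases (by omega : G.dist v c = 2 ∨ G.dist v c = 3) with he | he
    · exact he
    · exact absurd (C.noA3 rfl h1 he hc1) (fun h => h)
  have dcw'' : G.dist c w'' = 1 := by
    have t1 := C.tri c u w''
    have t2 := C.tri v c w''
    rw [SimpleGraph.dist_comm (u := c) (v := u), hc2'] at t1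
    rw [SimpleGraph.dist_comm (u := u) (v := w''), dw''u] at t1
    rcases (by omega : G.dist c w'' = 1 ∨ G.dist c w'' = 2) with he | he
    · exact he
    · exact absurd (C.no223 rfl dcv he h2) (fun h => h)
  have hadjwc : G.Adj w c := SimpleGraph.dist_eq_one_iff_adj.mp hc1
  have hadjw''c : G.Adj w'' c := by
    have : G.dist w'' c = 1 := by rw [SimpleGraph.dist_comm]; exact dcw''
    exact SimpleGraph.dist_eq_one_iff_adj.mp this
  have hadjcu : G.Adj c u := by
    have : G.dist c u = 1 := by rw [SimpleGraph.dist_comm]; exact hc2'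
    exact SimpleGraph.dist_eq_one_iff_adj.mp this
  exact (C.gen.1 w w'' hj).2 c u ⟨hadjwc, hadjw''c⟩ hu hadjcu

/-- the positive triangle from an H-geodesic bisecting a G-edge (δ odd). -/
lemma half_triangle (hodd : δ % 2 = 1) :
    RealizesTriangle G (tauFun δ 0 (δ / 2)) (tauFun δ 0 (δ / 2)) 1 := by
  have hδ := C.hδ
  obtain ⟨X, Y, hXY⟩ := C.diam_ex
  obtain ⟨x1, hadj, _⟩ := step_lemma G C.conG (x := X) (y := Y) (by omega)
  have hXx1 : G.dist X x1 = 1 := SimpleGraph.dist_eq_one_iff_adj.mpr hadj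
  have hH1 : H.dist X x1 = δ - 1 := by rw [C.htw X x1 hadj.ne, hXx1, tau_one (by omega)]
  obtain ⟨u, hu1, hu2⟩ := geodesic_point H C.conH (δ / 2) (δ / 2) (by rw [hH1]; omega)
  have huX : X ≠ u := ne_of_dist' (K := H) hu1 (by omega)
  have hux1 : u ≠ x1 := ne_of_dist' (K := H) hu2 (by omega)
  refine ⟨X, u, x1, ?_, ?_, hXx1⟩
  · rw [C.dG_of_dH huX, hu1]
  · rw [C.dG_of_dH hux1, hu2]

/-- from a (m,m,1) triangle to a (δ-m,δ-m,1) triangle. -/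
lemma pq (hA : ∀ v w w' : V, G.dist v w = δ → G.dist v w' = δ → G.dist w w' = 1 → False)
    {m : ℕ} (hm1 : 1 ≤ m) (hm2 : m + 1 ≤ δ)
    (hfδ : 2 * (δ - m) < δ ∨
      (∀ v w w' : V, G.dist v w = δ → G.dist v w' = δ → G.dist w w' = δ - 1 → False))
    (hS : RealizesTriangle G m m 1) : RealizesTriangle G (δ - m) (δ - m) 1 := by
  have hδ := C.hδ
  obtain ⟨x, y, z, hxy, hyz, hxz⟩ := hS
  obtain ⟨X, Y, hXY⟩ := C.diam_ex
  obtain ⟨u, huX, huY⟩ := geodesic_point G C.conG m (δ - m) (by rw [hXY]; omega)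
  have hXu_ne : X ≠ u := ne_of_dist' huX (by omega)
  obtain ⟨p, hp1, hp2⟩ := C.transport (a := x) (b := y) X u Y hXu_ne (by rw [huX, hxy])
  rw [hXY] at hp1; rw [huY] at hp2
  have hzp : G.dist z p = δ - 1 := by
    have t1 := C.tri x z p
    have hle := C.diam_le z p
    rw [hxz] at t1
    rcases (by omega : G.dist z p = δ - 1 ∨ G.dist z p = δ) with he | he
    · exact he
    · exact absurd (hA p x z ((SimpleGraph.dist_comm (u := p) (v := x)).trans hp1)
        ((SimpleGraph.dist_comm (u := p) (v := z)).trans he) hxz) (fun h => h)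
  obtain ⟨q, hq1, hq2⟩ := C.transport (a := z) (b := y) X u Y hXu_ne
    (by rw [huX, SimpleGraph.dist_comm (u := z) (v := y), hyz])
  rw [hXY] at hq1; rw [huY] at hq2
  have hzx : G.dist z x = 1 := by rw [SimpleGraph.dist_comm]; exact hxz
  have hxq : G.dist x q = δ - 1 := by
    have t1 := C.tri z x q
    have hle := C.diam_le x q
    rw [hzx] at t1
    rcases (by omega : G.dist x q = δ - 1 ∨ G.dist x q = δ) with he | he
    · exact he
    · exact absurd (hA q z x ((SimpleGraph.dist_comm (u := q) (v := z)).trans hq1)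
        ((SimpleGraph.dist_comm (u := q) (v := x)).trans he) hzx) (fun h => h)
  have hpq_ne : p ≠ q := by
    intro he; rw [he, hxq] at hp1; omega
  have hqx_ne : q ≠ x := by
    intro he; rw [he, SimpleGraph.dist_self] at hxq; omega
  have hH := C.triH (x := p) (y := q) (z := x) hpq_ne hqx_ne
  rw [SimpleGraph.dist_comm (u := p) (v := x)] at hH
  rw [hp1] at hH
  rw [SimpleGraph.dist_comm (u := q) (v := x), hxq, tau_delta, tau_dm1 (by omega)] at hH
  have hf := eq_one_or_delta (δ := δ) (by omega) (C.diam_le p q) (by omega)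
  rcases hf with hf | hf
  · exact ⟨p, y, q, (SimpleGraph.dist_comm (u := p) (v := y)).trans hp2, hq2, hf⟩
  · exfalso
    rcases hfδ with hlt | hAd1
    · have t1 := C.tri p y q
      rw [hf, SimpleGraph.dist_comm (u := p) (v := y), hp2, hq2] at t1
      omega
    · exact hAd1 p q x hf ((SimpleGraph.dist_comm (u := p) (v := x)).trans hp1)
        ((SimpleGraph.dist_comm (u := q) (v := x)).trans hxq)

/-- any (m,m,1) triangle forces m ∈ {⌊δ/2⌋,⌈δ/2⌉}, given (δ,δ,1)-freeness. -/
lemma S_sub (hA : ∀ v w w' : V, G.dist v w = δ → G.dist v w' = δ → G.dist w w' = 1 → False)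
    {m : ℕ} (hS : RealizesTriangle G m m 1) : m = δ / 2 ∨ m = (δ + 1) / 2 := by
  have hδ := C.hδ
  obtain ⟨x, y, z, hxy, hyz, hxz⟩ := hS
  have hm1 : 1 ≤ m := by
    by_contra hm
    have h0 : m = 0 := by omega
    rw [h0] at hxy hyz
    have e1 : x = y := C.conG.dist_eq_zero_iff.mp hxy
    have e2 : y = z := C.conG.dist_eq_zero_iff.mp hyz
    rw [e1, e2, SimpleGraph.dist_self] at hxz; omega
  have hmle : m ≤ δ := by rw [← hxy]; exact C.diam_le x y
  have hmd : m ≠ δ := by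
    intro he
    exact hA y x z ((SimpleGraph.dist_comm (u := y) (v := x)).trans (hxy.trans (by omega)))
      (hyz.trans (by omega)) hxz
  have hstar := C.triH (x := x) (y := y) (z := z)
    (ne_of_dist' hxy (by omega)) (ne_of_dist' hyz (by omega))
  rw [hxy, hyz, hxz, tau_one (by omega)] at hstar
  -- (#) : construct p with d(x,p) = δ, d(y,p) = δ - m, d(z,p) = δ - 1
  obtain ⟨X, Y, hXY⟩ := C.diam_ex
  obtain ⟨u, huX, huY⟩ := geodesic_point G C.conG m (δ - m) (by rw [hXY]; omega)
  have hXu_ne : X ≠ u := ne_of_dist' huX (by omega)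
  obtain ⟨p, hp1, hp2⟩ := C.transport (a := x) (b := y) X u Y hXu_ne (by rw [huX, hxy])
  rw [hXY] at hp1; rw [huY] at hp2
  have hzp : G.dist z p = δ - 1 := by
    have t1 := C.tri x z p
    have hle := C.diam_le z p
    rw [hxz] at t1
    rcases (by omega : G.dist z p = δ - 1 ∨ G.dist z p = δ) with he | he
    · exact he
    · exact absurd (hA p x z ((SimpleGraph.dist_comm (u := p) (v := x)).trans hp1)
        ((SimpleGraph.dist_comm (u := p) (v := z)).trans he) hxz) (fun h => h)
  have hpy_ne : p ≠ y := by
    intro he; rw [← he, SimpleGraph.dist_self] at hp2; omega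
  have hsharp := C.triH (x := z) (y := p) (z := y)
    (ne_of_dist' hzp (by omega)) hpy_ne
  rw [SimpleGraph.dist_comm (u := z) (v := y), hyz, hzp,
    SimpleGraph.dist_comm (u := p) (v := y), hp2, tau_dm1 (by omega)] at hsharp
  have hpair := tau_pair (δ := δ) (i := m) hmle
  rcases tau_either δ m with ht | ht <;> omega

/-- non-bipartite anchor: some (m,m,1) triangle exists. -/
lemma anchor (hnbip : ¬ IsBipartiteGraph G) : ∃ m, RealizesTriangle G m m 1 := by
  classical
  by_contra hno
  push_neg at hno
  obtain ⟨v0, _, _⟩ := C.diam_ex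
  apply hnbip
  refine ⟨fun x => decide (G.dist v0 x % 2 = 1), fun x y hadj => ?_⟩
  have h1 : G.dist x y = 1 := SimpleGraph.dist_eq_one_iff_adj.mpr hadj
  have t1 := C.tri v0 x y
  have t2 := C.tri v0 y x
  rw [h1] at t1
  rw [SimpleGraph.dist_comm (u := y) (v := x), h1] at t2
  have hne : G.dist v0 x ≠ G.dist v0 y := by
    intro he
    exact hno (G.dist v0 x)
      ⟨x, v0, y, SimpleGraph.dist_comm (u := x) (v := v0), he.symm ▸ rfl, h1⟩
  rcases (by omega :
      (G.dist v0 x % 2 = 1 ∧ G.dist v0 y % 2 = 0) ∨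
      (G.dist v0 x % 2 = 0 ∧ G.dist v0 y % 2 = 1)) with ⟨ha, hb⟩ | ⟨ha, hb⟩ <;>
    simp [ha, hb]

end Ctx
end MHT

/-- if `Γ` is not bipartite, of generic type, and `Γ^{τ₀}` is
metrically homogeneous, then `Γ` is antipodal with `K₁ = ⌊δ/2⌋`,
`K₂ = ⌈δ/2⌉`. -/


theorem necessity_tau_zero_not_bipartite {V : Type*} (G H : SimpleGraph V)
    (δ : ℕ) (hδ : 3 ≤ δ)
    (hG : IsMetricallyHomogeneous G) (hgen : GenericType G)
    (hnbip : ¬ IsBipartiteGraph G)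
    (hdiam : HasDiameter G δ)
    (hH : IsMetricallyHomogeneous H)
    (htw : ∀ x y : V, x ≠ y → H.dist x y = tauFun δ 0 (G.dist x y)) :
    IsAntipodal G δ ∧ IsK1 G (δ / 2) ∧ IsK2 G ((δ + 1) / 2) := by
  have C : MHT.Ctx G H δ := ⟨hδ, hG.1, hG.2, hgen, hdiam.1, hdiam.2, hH.1, htw⟩
  have hA : ∀ v w w' : V, G.dist v w = δ → G.dist v w' = δ → G.dist w w' = 1 → False := by
    rcases (by omega : δ = 3 ∨ 4 ≤ δ) with h3 | h4
    · exact fun a b c ha hb hc => C.noA3 h3 ha hb hc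
    · exact fun a b c ha hb hc => C.noA h4 ha hb hc
  have hboth : RealizesTriangle G (δ / 2) (δ / 2) 1 ∧
      RealizesTriangle G ((δ + 1) / 2) ((δ + 1) / 2) 1 := by
    rcases Nat.even_or_odd δ with hev | hod
    · have hev' : δ % 2 = 0 := Nat.even_iff.mp hev
      obtain ⟨m, hm⟩ := C.anchor hnbip
      rcases C.S_sub hA hm with h | h
      · exact ⟨h ▸ hm, by rw [(by omega : (δ + 1) / 2 = δ / 2)]; exact h ▸ hm⟩
      · exact ⟨by rw [(by omega : δ / 2 = (δ + 1) / 2)]; exact h ▸ hm, h ▸ hm⟩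
    · have hom : δ % 2 = 1 := Nat.odd_iff.mp hod
      have hf := C.half_triangle hom
      rcases MHT.Ctx.tau_either δ (δ / 2) with ht | ht
      · rw [ht] at hf
        rcases (by omega : δ = 3 ∨ 4 ≤ δ) with h3 | h4
        · exfalso
          rw [h3] at ht
          exact absurd ht (by decide)
        · have hB : ∀ v w w' : V,
              G.dist v w = δ → G.dist v w' = δ → G.dist w w' = 2 → False :=
            fun a b c ha hb hc => C.noB h4 hA ha hb hc
          have hAd1 : ∀ v w w' : V,
              G.dist v w = δ → G.dist v w' = δ → G.dist w w' = δ - 1 → False :=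
            fun a b c ha hb hc => C.noA' h4 hB ha hb hc
          have hce := C.pq hA (m := δ / 2) (by omega) (by omega) (Or.inr hAd1) hf
          exact ⟨hf, by rw [(by omega : (δ + 1) / 2 = δ - δ / 2)]; exact hce⟩
      · rw [ht] at hf
        have hfl := C.pq hA (m := δ - δ / 2) (by omega) (by omega)
          (Or.inl (by omega)) hf
        constructor
        · rw [(by omega : δ / 2 = δ - (δ - δ / 2))]; exact hfl
        · rw [(by omega : (δ + 1) / 2 = δ - δ / 2)]; exact hf
  have E1 : ∀ v w w' : V, G.dist v w = δ → G.dist v w' = δ → w ≠ w' → False := by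
    rcases (by omega : δ = 3 ∨ 4 ≤ δ) with h3 | h4
    · intro v w w' h1 h2 hne
      have h111 : RealizesTriangle G 1 1 1 := by
        have h := hboth.1
        rw [h3] at h
        have e : (3 : ℕ) / 2 = 1 := by norm_num
        rw [e] at h
        exact h
      have hj1 := C.dpos hne
      have hjle := C.diam_le w w'
      rcases (by omega : G.dist w w' = 1 ∨ G.dist w w' = 2 ∨ G.dist w w' = 3) with hj | hj | hj
      · exact C.noA3 h3 h1 h2 hj
      · exact C.noB3 h3 h111 h1 h2 hj
      · exact C.noC hA h1 h2 (by rw [h3]; exact hj)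
    · exact fun v w w' h1 h2 hne => C.E1ge4 h4 h1 h2 hne
  refine ⟨?_, ⟨hboth.1, ?_⟩, ⟨hboth.2, ?_⟩⟩
  · intro v
    obtain ⟨w, hw⟩ := C.exists_far v
    refine ⟨w, hw, ?_⟩
    intro w' hw'
    by_contra hne
    exact E1 v w' w hw' hw hne
  · intro m hm
    rcases C.S_sub hA hm with h | h <;> omega
  · intro m hm
    rcases C.S_sub hA hm with h | h <;> omega
end

section
/- Let Γ be a metrically homogeneous graph of generic type with finite diameter δ ≥ 3 whose numerical parameters are K₁ = δ, K₂ = δ, C = 3δ+1, C' = C+1. Then Γ^{ρ⁻¹} is a metrically homogeneous graph. -/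
open SimpleGraph

namespace TwistAux

variable {V : Type*} {G : SimpleGraph V}

/-- The twisted graph: edges are pairs at distance 2. -/
def twistGraph (G : SimpleGraph V) : SimpleGraph V where
  Adj a b := G.dist a b = 2
  symm := ⟨fun a b h => by change G.dist a b = 2 at h; change G.dist b a = 2; rwa [SimpleGraph.dist_comm]⟩
  loopless := ⟨fun a h => by change G.dist a a = 2 at h; simp [SimpleGraph.dist_self] at h⟩

lemma rhoInv_step_arith (δ a b c : ℕ) (hδ : 3 ≤ δ) (ha : a ≤ δ) (hb : b ≤ δ) (hc : c ≤ δ)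
    (h1 : (a = c ∧ a = δ) ∨ a + 1 = c ∨ c + 1 = a)
    (h2 : (c = b ∧ c = δ) ∨ c + 1 = b ∨ b + 1 = c) :
    rhoInvFun δ b ≤ rhoInvFun δ a + 1 := by
  simp only [rhoInvFun, Nat.even_iff]
  rcases h1 with ⟨h,h'⟩|h|h <;> rcases h2 with ⟨g,g'⟩|g|g <;> split_ifs <;> omega

lemma rhoInv_eq_zero (δ d : ℕ) (hd : d ≤ δ) (h : rhoInvFun δ d = 0) : d = 0 := by
  simp only [rhoInvFun, Nat.even_iff] at h; split_ifs at h <;> omega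

lemma rhoInv_inj (δ a b : ℕ) (ha : a ≤ δ) (hb : b ≤ δ)
    (h : rhoInvFun δ a = rhoInvFun δ b) : a = b := by
  simp only [rhoInvFun, Nat.even_iff] at h; split_ifs at h <;> omega

lemma seg (hc : G.Connected) {u v : V} (p : G.Walk u v) (i j : ℕ) (hij : i ≤ j) :
    G.dist (p.getVert i) (p.getVert j) ≤ j - i := by
  induction j, hij using Nat.le_induction with
  | base => simp [SimpleGraph.dist_self]
  | succ j hij ih =>
    by_cases hj : j < p.length
    · have hadj := p.adj_getVert_succ hj
      have h1 : G.dist (p.getVert j) (p.getVert (j+1)) ≤ 1 := by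
        simpa using SimpleGraph.dist_le hadj.toWalk
      have h2 := hc.dist_triangle (u := p.getVert i) (v := p.getVert j) (w := p.getVert (j+1))
      omega
    · have hv : p.getVert (j+1) = p.getVert j := by
        rw [p.getVert_of_length_le (by omega), p.getVert_of_length_le (by omega)]
      rw [hv]; omega

lemma geodesic (hc : G.Connected) {u v : V} (p : G.Walk u v) (hp : p.length = G.dist u v)
    {i j : ℕ} (hij : i ≤ j) (hj : j ≤ p.length) :
    G.dist (p.getVert i) (p.getVert j) = j - i := by
  refine le_antisymm (seg hc p i j hij) ?_
  have h1 : G.dist u (p.getVert i) ≤ i := by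
    simpa [p.getVert_zero] using seg hc p 0 i (Nat.zero_le _)
  have h2 : G.dist (p.getVert j) v ≤ p.length - j := by
    simpa [p.getVert_length] using seg hc p j p.length hj
  have h3 := hc.dist_triangle (u := u) (v := p.getVert i) (w := p.getVert j)
  have h4 := hc.dist_triangle (u := u) (v := p.getVert j) (w := v)
  omega

/-- Two-point homogeneity. -/
lemma two_point (hG : IsMetricallyHomogeneous G) {x y x' y' : V}
    (h : G.dist x' y' = G.dist x y) :
    ∃ g : V ≃ V, (∀ a b : V, G.dist (g a) (g b) = G.dist a b) ∧ g x = x' ∧ g y = y' := by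
  classical
  obtain ⟨hc, hext⟩ := hG
  by_cases hxy : x = y
  · subst hxy
    have hxy' : x' = y' := by
      rw [SimpleGraph.dist_self] at h
      exact ((hc.dist_eq_zero_iff).mp h)
    obtain ⟨g, hg, hs⟩ := hext {x} (fun _ => x') (by
      intro a ha b hb
      simp only [Finset.mem_singleton] at ha hb
      subst ha; subst hb; simp [SimpleGraph.dist_self])
    exact ⟨g, hg, hs x (Finset.mem_singleton_self x), by
      rw [hs x (Finset.mem_singleton_self x), hxy']⟩
  · have hyx : y ≠ x := fun hh => hxy hh.symm
    obtain ⟨g, hg, hs⟩ := hext {x, y} (fun v => if v = x then x' else y') (by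
      intro a ha b hb
      simp only [Finset.mem_insert, Finset.mem_singleton] at ha hb
      show G.dist (if a = x then x' else y') (if b = x then x' else y') = G.dist a b
      split_ifs with h1 h2 h2
      · subst h1; subst h2; simp [SimpleGraph.dist_self]
      · have hb' : b = y := by tauto
        subst h1; subst hb'; exact h
      · have ha' : a = y := by tauto
        subst ha'; subst h2
        rw [SimpleGraph.dist_comm, h]; exact SimpleGraph.dist_comm
      · have ha' : a = y := by tauto
        have hb' : b = y := by tauto
        subst ha'; subst hb'; simp [SimpleGraph.dist_self])
    refine ⟨g, hg, ?_, ?_⟩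
    · simpa using hs x (by simp)
    · simpa [hyx] using hs y (by simp)

/-- Transfer of a configuration along two-point homogeneity. -/
lemma transfer (hG : IsMetricallyHomogeneous G) {e f : ℕ}
    (w : ∃ A B C : V, G.dist A B = f ∧ G.dist A C = 2 ∧ G.dist B C = e)
    {x y : V} (hxy : G.dist x y = f) : ∃ z : V, G.dist x z = 2 ∧ G.dist z y = e := by
  obtain ⟨A, B, C, h1, h2, h3⟩ := w
  obtain ⟨g, hiso, hgA, hgB⟩ := two_point hG (x := A) (y := B) (x' := x) (y' := y)
    (by rw [hxy, h1])
  refine ⟨g C, ?_, ?_⟩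
  · rw [← hgA, hiso]; exact h2
  · rw [← hgB, hiso, SimpleGraph.dist_comm]; exact h3

lemma kk1 {δ : ℕ} (hδ : 3 ≤ δ) (hK1 : IsK1 G δ) (hK2 : IsK2 G δ) {k : ℕ}
    (h : RealizesTriangle G k k 1) : k = δ :=
  le_antisymm (hK2.2 h) (hK1.2 h)

lemma edge_eq {δ : ℕ} (hδ : 3 ≤ δ) (hK1 : IsK1 G δ) (hK2 : IsK2 G δ) {a b x : V}
    (hab : G.Adj a b) (h : G.dist x a = G.dist x b) : G.dist x a = δ :=
  kk1 hδ hK1 hK2 ⟨a, x, b, SimpleGraph.dist_comm, h.symm ▸ rfl,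
    SimpleGraph.dist_eq_one_iff_adj.mpr hab⟩

lemma step2 {δ : ℕ} (hc : G.Connected) (hδ : 3 ≤ δ) (hdiam : HasDiameter G δ)
    (hK1 : IsK1 G δ) (hK2 : IsK2 G δ) {u w : V} (x : V) (huw : G.dist u w = 2) :
    rhoInvFun δ (G.dist x w) ≤ rhoInvFun δ (G.dist x u) + 1 := by
  obtain ⟨p, hp⟩ := SimpleGraph.exists_walk_of_dist_ne_zero
    (by rw [huw]; omega : G.dist u w ≠ 0)
  rw [huw] at hp
  have h1 : G.Adj u (p.getVert 1) := by
    have := p.adj_getVert_succ (by omega : 0 < p.length)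
    rwa [p.getVert_zero] at this
  have h2 : G.Adj (p.getVert 1) w := by
    have := p.adj_getVert_succ (by omega : 1 < p.length)
    rwa [show (1+1 : ℕ) = p.length by omega, p.getVert_length] at this
  have d1 : G.dist u (p.getVert 1) = 1 := SimpleGraph.dist_eq_one_iff_adj.mpr h1
  have d1' : G.dist (p.getVert 1) u = 1 := SimpleGraph.dist_eq_one_iff_adj.mpr h1.symm
  have d2 : G.dist (p.getVert 1) w = 1 := SimpleGraph.dist_eq_one_iff_adj.mpr h2
  have d2' : G.dist w (p.getVert 1) = 1 := SimpleGraph.dist_eq_one_iff_adj.mpr h2.symm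
  have e1 := hc.dist_triangle (u := x) (v := u) (w := p.getVert 1)
  have e2 := hc.dist_triangle (u := x) (v := p.getVert 1) (w := u)
  have e3 := hc.dist_triangle (u := x) (v := p.getVert 1) (w := w)
  have e4 := hc.dist_triangle (u := x) (v := w) (w := p.getVert 1)
  apply rhoInv_step_arith δ _ _ (G.dist x (p.getVert 1)) hδ (hdiam.1 x u) (hdiam.1 x w)
    (hdiam.1 x (p.getVert 1))
  · by_cases hq : G.dist x u = G.dist x (p.getVert 1)
    · exact Or.inl ⟨hq, edge_eq hδ hK1 hK2 h1 hq⟩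
    · rw [d1] at e1; rw [d1'] at e2; omega
  · by_cases hq : G.dist x (p.getVert 1) = G.dist x w
    · exact Or.inl ⟨hq, edge_eq hδ hK1 hK2 h2 hq⟩
    · rw [d2] at e3; rw [d2'] at e4; omega

lemma lower {δ : ℕ} (hc : G.Connected) (hδ : 3 ≤ δ) (hdiam : HasDiameter G δ)
    (hK1 : IsK1 G δ) (hK2 : IsK2 G δ) :
    ∀ {x y : V} (p : (twistGraph G).Walk x y), rhoInvFun δ (G.dist x y) ≤ p.length := by
  intro x y p
  induction p with
  | nil => simp [SimpleGraph.dist_self, rhoInvFun]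
  | @cons x z y h p ih =>
    have h2 : G.dist z x = 2 := by rw [SimpleGraph.dist_comm]; exact h
    have hstep := step2 hc hδ hdiam hK1 hK2 y h2
    rw [SimpleGraph.Walk.length_cons]
    calc rhoInvFun δ (G.dist x y) = rhoInvFun δ (G.dist y x) := by rw [SimpleGraph.dist_comm]
      _ ≤ rhoInvFun δ (G.dist y z) + 1 := hstep
      _ = rhoInvFun δ (G.dist z y) + 1 := by rw [SimpleGraph.dist_comm]
      _ ≤ p.length + 1 := by omega

lemma cross {δ : ℕ} (hc : G.Connected) (hδ : 3 ≤ δ) (hK2 : IsK2 G δ) (hK1 : IsK1 G δ) :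
    ∃ A B C : V, G.dist A B = 2 ∧ G.dist B C = δ - 1 ∧ G.dist A C = δ := by
  obtain ⟨x0, y0, z0, h1, h2, h3⟩ := hK2.1
  have hr : G.dist y0 x0 = δ := by rw [SimpleGraph.dist_comm]; exact h1
  obtain ⟨p, hp⟩ := hc.exists_walk_length_eq_dist y0 x0
  rw [hr] at hp
  have hyu : G.dist y0 (p.getVert (δ - 1)) = δ - 1 := by
    have := geodesic hc p (hp.trans hr.symm) (i := 0) (j := δ - 1) (by omega) (by omega)
    rwa [p.getVert_zero, Nat.sub_zero] at this
  have hux : G.dist (p.getVert (δ - 1)) x0 = 1 := by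
    have := geodesic hc p (hp.trans hr.symm) (i := δ - 1) (j := p.length) (by omega) le_rfl
    rw [p.getVert_length, hp] at this
    rwa [show δ - (δ - 1) = 1 by omega] at this
  have huz : p.getVert (δ - 1) ≠ z0 := by
    intro hq; rw [hq, h2] at hyu; omega
  have hle2 : G.dist (p.getVert (δ - 1)) z0 ≤ 2 := by
    have := hc.dist_triangle (u := p.getVert (δ - 1)) (v := x0) (w := z0)
    omega
  have hpos : 0 < G.dist (p.getVert (δ - 1)) z0 := hc.pos_dist_of_ne huz
  have hne1 : G.dist (p.getVert (δ - 1)) z0 ≠ 1 := by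
    intro hq
    have : (1 : ℕ) = δ := kk1 hδ hK1 hK2
      ⟨x0, p.getVert (δ - 1), z0, by rw [SimpleGraph.dist_comm]; exact hux, hq, h3⟩
    omega
  refine ⟨z0, p.getVert (δ - 1), y0, ?_, ?_, ?_⟩
  · rw [SimpleGraph.dist_comm]; omega
  · rw [SimpleGraph.dist_comm]; exact hyu
  · rw [SimpleGraph.dist_comm]; exact h2

lemma upper {δ : ℕ} (hc : G.Connected) (hδ : 3 ≤ δ) (hG : IsMetricallyHomogeneous G)
    (hdiam : HasDiameter G δ) (hK1 : IsK1 G δ) (hK2 : IsK2 G δ) :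
    ∀ (t : ℕ) (x y : V), rhoInvFun δ (G.dist x y) = t →
      ∃ p : (twistGraph G).Walk x y, p.length = t := by
  intro t
  induction t with
  | zero =>
    intro x y h
    have h0 : G.dist x y = 0 := rhoInv_eq_zero δ _ (hdiam.1 x y) h
    have hxy : x = y := (hc.dist_eq_zero_iff).mp h0
    subst hxy
    exact ⟨SimpleGraph.Walk.nil, rfl⟩
  | succ t ih =>
    intro x y h
    have hdle : G.dist x y ≤ δ := hdiam.1 x y
    rcases Nat.even_or_odd (G.dist x y) with he|ho
    · have he' := (Nat.even_iff).mp he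
      have hdt : G.dist x y / 2 = t + 1 := by rw [← h]; simp [rhoInvFun, he]
      have hd2 : 2 ≤ G.dist x y := by omega
      obtain ⟨p, hp⟩ := hc.exists_walk_length_eq_dist x y
      have hxz : G.dist x (p.getVert 2) = 2 := by
        have := geodesic hc p hp (i := 0) (j := 2) (by omega) (by omega)
        rwa [p.getVert_zero, Nat.sub_zero] at this
      have hzy : G.dist (p.getVert 2) y = G.dist x y - 2 := by
        have := geodesic hc p hp (i := 2) (j := p.length) (by omega) le_rfl
        rwa [p.getVert_length, hp] at this
      have ht : rhoInvFun δ (G.dist (p.getVert 2) y) = t := by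
        rw [hzy]
        simp only [rhoInvFun, Nat.even_iff]
        split_ifs <;> omega
      obtain ⟨q, hq⟩ := ih (p.getVert 2) y ht
      exact ⟨SimpleGraph.Walk.cons (show (twistGraph G).Adj x (p.getVert 2) from hxz) q, by simp [hq]⟩
    · have ho' := (Nat.odd_iff).mp ho
      have hne : ¬ Even (G.dist x y) := by rw [Nat.even_iff]; omega
      have hdt : δ - (G.dist x y - 1) / 2 = t + 1 := by rw [← h]; simp [rhoInvFun, hne]
      have hd1 : 1 ≤ G.dist x y := by omega
      by_cases hclimb : G.dist x y + 2 ≤ δ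
      · obtain ⟨X, Y, hXY⟩ := hdiam.2
        obtain ⟨P, hP⟩ := hc.exists_walk_length_eq_dist X Y
        rw [hXY] at hP
        have hAB : G.dist (P.getVert 2) (P.getVert (G.dist x y + 2)) = G.dist x y := by
          have := geodesic hc P (hP.trans hXY.symm) (i := 2) (j := G.dist x y + 2)
            (by omega) (by omega)
          rwa [show G.dist x y + 2 - 2 = G.dist x y by omega] at this
        have hAC : G.dist (P.getVert 2) (P.getVert 0) = 2 := by
          have := geodesic hc P (hP.trans hXY.symm) (i := 0) (j := 2) (by omega) (by omega)
          rw [SimpleGraph.dist_comm]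
          rwa [Nat.sub_zero] at this
        have hBC : G.dist (P.getVert (G.dist x y + 2)) (P.getVert 0) = G.dist x y + 2 := by
          have := geodesic hc P (hP.trans hXY.symm) (i := 0) (j := G.dist x y + 2)
            (by omega) (by omega)
          rw [SimpleGraph.dist_comm]
          rwa [Nat.sub_zero] at this
        obtain ⟨z, hz1, hz2⟩ := transfer hG
          ⟨P.getVert 2, P.getVert (G.dist x y + 2), P.getVert 0, hAB, hAC, hBC⟩ rfl
        have ht : rhoInvFun δ (G.dist z y) = t := by
          rw [hz2]
          simp only [rhoInvFun, Nat.even_iff]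
          split_ifs <;> omega
        obtain ⟨q, hq⟩ := ih z y ht
        exact ⟨SimpleGraph.Walk.cons (show (twistGraph G).Adj x z from hz1) q, by simp [hq]⟩
      · obtain ⟨Z, U, Yv, c1, c2, c3⟩ := cross hc hδ hK2 hK1
        rcases (by omega : G.dist x y = δ ∨ G.dist x y = δ - 1) with hcase|hcase
        · obtain ⟨z, hz1, hz2⟩ := transfer hG
            ⟨Z, Yv, U, c3.trans hcase.symm, c1, SimpleGraph.dist_comm.trans c2⟩ rfl
          have ht : rhoInvFun δ (G.dist z y) = t := by
            rw [hz2]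
            simp only [rhoInvFun, Nat.even_iff]
            split_ifs <;> omega
          obtain ⟨q, hq⟩ := ih z y ht
          exact ⟨SimpleGraph.Walk.cons (show (twistGraph G).Adj x z from hz1) q, by simp [hq]⟩
        · obtain ⟨z, hz1, hz2⟩ := transfer hG
            ⟨U, Yv, Z, c2.trans hcase.symm, SimpleGraph.dist_comm.trans c1,
              SimpleGraph.dist_comm.trans c3⟩ rfl
          have ht : rhoInvFun δ (G.dist z y) = t := by
            rw [hz2]
            simp only [rhoInvFun, Nat.even_iff]
            split_ifs <;> omega
          obtain ⟨q, hq⟩ := ih z y ht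
          exact ⟨SimpleGraph.Walk.cons (show (twistGraph G).Adj x z from hz1) q, by simp [hq]⟩

end TwistAux

/-- a metrically homogeneous graph of generic type with
parameters `K₁ = δ`, `K₂ = δ`, `C = 3δ+1`, `C' = C+1` is twistable by
`ρ⁻¹`. -/


theorem sufficiency_rho_inv {V : Type*} (G : SimpleGraph V) (δ : ℕ) (hδ : 3 ≤ δ)
    (hG : IsMetricallyHomogeneous G) (hgen : GenericType G)
    (hdiam : HasDiameter G δ)
    (hK1 : IsK1 G δ) (hK2 : IsK2 G δ)
    (hC : ∃ c0 c1 : ℕ, IsC0 G δ c0 ∧ IsC1 G δ c1 ∧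
      min c0 c1 = 3 * δ + 1 ∧ max c0 c1 = 3 * δ + 1 + 1) :
    ∃ H : SimpleGraph V, IsMetricallyHomogeneous H ∧
      ∀ x y : V, x ≠ y → H.dist x y = rhoInvFun δ (G.dist x y) := by
  classical
  have hc : G.Connected := hG.1
  have key : ∀ x y : V, (TwistAux.twistGraph G).dist x y = rhoInvFun δ (G.dist x y) := by
    intro x y
    obtain ⟨p, hp⟩ := TwistAux.upper hc hδ hG hdiam hK1 hK2 (rhoInvFun δ (G.dist x y)) x y rfl
    refine le_antisymm (hp ▸ SimpleGraph.dist_le p) ?_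
    obtain ⟨q, hq⟩ := SimpleGraph.Reachable.exists_walk_length_eq_dist ⟨p⟩
    rw [← hq]
    exact TwistAux.lower hc hδ hdiam hK1 hK2 q
  have hpre : (TwistAux.twistGraph G).Preconnected := by
    intro x y
    obtain ⟨p, _⟩ := TwistAux.upper hc hδ hG hdiam hK1 hK2 (rhoInvFun δ (G.dist x y)) x y rfl
    exact ⟨p⟩
  obtain ⟨X, Y, -⟩ := hdiam.2
  haveI : Nonempty V := ⟨X⟩
  refine ⟨TwistAux.twistGraph G, ⟨SimpleGraph.Connected.mk hpre, ?_⟩, fun x y _ => key x y⟩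
  intro s f hf
  have hf' : ∀ x ∈ s, ∀ y ∈ s, G.dist (f x) (f y) = G.dist x y := by
    intro x hx y hy
    have h1 := hf x hx y hy
    rw [key, key] at h1
    exact TwistAux.rhoInv_inj δ _ _ (hdiam.1 (f x) (f y)) (hdiam.1 x y) h1
  obtain ⟨g, hgiso, hgs⟩ := hG.2 s f hf'
  refine ⟨g, fun x y => ?_, hgs⟩
  rw [key, key, hgiso]
end

section
/- Let Γ be a bipartite metrically homogeneous graph of generic type with diameter δ ≥ 3, and let ε ∈ {0,1} satisfy δ ≡ ε (mod 2) and C₀ = 2(δ+ε)+2. Then Γ^{τ_ε} is a metrically homogeneous graph. -/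
open SimpleGraph

section AuxLemmas



variable {V : Type*} {G : SimpleGraph V}

lemma myadj_dist (h : G.Adj x y) : G.dist x y = 1 := dist_eq_one_iff_adj.mpr h

lemma my_step (hc : G.Connected) {y z : V} (h : G.dist y z ≠ 0) :
    ∃ w, G.Adj y w ∧ G.dist w z + 1 = G.dist y z := by
  obtain ⟨p, hp⟩ := exists_walk_of_dist_ne_zero h
  cases p with
  | nil => simp [SimpleGraph.dist_self] at h
  | cons hadj q =>
    rename_i w
    refine ⟨w, hadj, ?_⟩
    have h1 : G.dist w z ≤ q.length := dist_le q
    have h2 : G.dist y z ≤ G.dist y w + G.dist w z := hc.dist_triangle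
    have h3 : G.dist y w = 1 := myadj_dist hadj
    simp [SimpleGraph.Walk.length_cons] at hp
    omega

lemma my_geodesic (hc : G.Connected) :
    ∀ (k : ℕ) {j : ℕ} (x y : V), k + j = G.dist x y →
      ∃ w, G.dist x w = k ∧ G.dist w y = j := by
  intro k
  induction k with
  | zero => intro j x y h; exact ⟨x, by simp, by omega⟩
  | succ k ih =>
    intro j x y h
    obtain ⟨w, hadj, hw⟩ := my_step hc (y := x) (z := y) (by omega)
    obtain ⟨w', h1, h2⟩ := ih (j := j) w y (by omega)
    
    have t1 : G.dist x w' ≤ G.dist x w + G.dist w w' := hc.dist_triangle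
    have t2 : G.dist x y ≤ G.dist x w' + G.dist w' y := hc.dist_triangle
    have h3 : G.dist x w = 1 := myadj_dist hadj
    exact ⟨w', by omega, h2⟩

lemma my_walk_parity {f : V → Bool} (hf : ∀ x y : V, G.Adj x y → f x ≠ f y) :
    ∀ {x y : V} (p : G.Walk x y), Even p.length ↔ f x = f y := by
  intro x y p
  induction p with
  | nil => simp
  | @cons a b c hadj q ih =>
    have hne : f a ≠ f b := hf _ _ hadj
    simp only [SimpleGraph.Walk.length_cons, Nat.even_add_one]
    rw [ih]
    cases hb : f a <;> cases hc : f b <;> cases hd : f c <;> simp_all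

lemma my_even_dist (hc : G.Connected) {f : V → Bool} (hf : ∀ x y : V, G.Adj x y → f x ≠ f y)
    (x y : V) : Even (G.dist x y) ↔ f x = f y := by
  obtain ⟨p, hp⟩ := hc.exists_walk_length_eq_dist x y
  rw [← hp]; exact my_walk_parity hf p

lemma my_perim_even (hc : G.Connected) {f : V → Bool} (hf : ∀ x y : V, G.Adj x y → f x ≠ f y)
    (x y z : V) : Even (G.dist x y + G.dist y z + G.dist x z) := by
  have h1 := my_even_dist hc hf x y
  have h2 := my_even_dist hc hf y z
  have h3 := my_even_dist hc hf x z
  rw [Nat.even_add, Nat.even_add, h1, h2, h3]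
  cases hb : f x <;> cases hcc : f y <;> cases hd : f z <;> simp_all

lemma my_point_transfer (hG : IsMetricallyHomogeneous G) (x₀ x : V) :
    ∃ g : V ≃ V, (∀ a b : V, G.dist (g a) (g b) = G.dist a b) ∧ g x₀ = x := by
  classical
  obtain ⟨g, hg, hgs⟩ := hG.2 {x₀} (fun _ => x) (by intro a ha b hb; simp at ha hb; simp [ha, hb, SimpleGraph.dist_self])
  exact ⟨g, hg, hgs x₀ (by simp)⟩

lemma my_pair_transfer [DecidableEq V] (hG : IsMetricallyHomogeneous G) {x₀ y₀ x y : V}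
    (hne : x₀ ≠ y₀) (hd : G.dist x y = G.dist x₀ y₀) :
    ∃ g : V ≃ V, (∀ a b : V, G.dist (g a) (g b) = G.dist a b) ∧ g x₀ = x ∧ g y₀ = y := by
  have hcond : ∀ a ∈ ({x₀, y₀} : Finset V), ∀ b ∈ ({x₀, y₀} : Finset V),
      G.dist ((fun v => if v = x₀ then x else y) a) ((fun v => if v = x₀ then x else y) b)
        = G.dist a b := by
    intro a ha b hb
    simp only [Finset.mem_insert, Finset.mem_singleton] at ha hb
    have hsym : G.dist y x = G.dist y₀ x₀ := by
      rw [SimpleGraph.dist_comm, hd]; exact SimpleGraph.dist_comm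
    rcases ha with rfl | rfl <;> rcases hb with rfl | rfl <;>
      simp [hne, Ne.symm hne, hd, hsym, SimpleGraph.dist_self]
  obtain ⟨g, hg, hgs⟩ := hG.2 {x₀, y₀} (fun v => if v = x₀ then x else y) hcond
  refine ⟨g, hg, ?_, ?_⟩
  · have := hgs x₀ (by simp); simpa using this
  · have := hgs y₀ (by simp)
    rwa [if_neg (Ne.symm hne)] at this

lemma my_exists_pair (hc : G.Connected) {δ : ℕ} (hdiam : HasDiameter G δ) {k : ℕ} (hk : k ≤ δ) :
    ∃ x y : V, G.dist x y = k := by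
  obtain ⟨x, y, hxy⟩ := hdiam.2
  obtain ⟨w, h1, _⟩ := my_geodesic hc k (j := δ - k) x y (by omega)
  exact ⟨x, w, h1⟩

lemma my_exists_at (hc : G.Connected) (hG : IsMetricallyHomogeneous G) {δ : ℕ}
    (hdiam : HasDiameter G δ) (x : V) {k : ℕ} (hk : k ≤ δ) :
    ∃ w : V, G.dist x w = k := by
  obtain ⟨x₀, w₀, h₀⟩ := my_exists_pair hc hdiam hk
  obtain ⟨g, hg, hgx⟩ := my_point_transfer hG x₀ x
  exact ⟨g w₀, by rw [← hgx, hg, h₀]⟩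

lemma my_extension [DecidableEq V] (hc : G.Connected) (hG : IsMetricallyHomogeneous G) {δ : ℕ}
    (hdiam : HasDiameter G δ) {x y : V} {k : ℕ} (h1 : G.dist x y ≠ 0)
    (h2 : G.dist x y + k ≤ δ) :
    ∃ w : V, G.dist x w = G.dist x y + k ∧ G.dist y w = k := by
  obtain ⟨x₀, w₀, h₀⟩ := my_exists_pair hc hdiam h2
  obtain ⟨y₀, hx₀y₀, hy₀w₀⟩ := my_geodesic hc (G.dist x y) (j := k) x₀ w₀ (by omega)
  have hne : x₀ ≠ y₀ := by
    intro h; rw [h, SimpleGraph.dist_self] at hx₀y₀; omega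
  obtain ⟨g, hg, hgx, hgy⟩ := my_pair_transfer hG hne hx₀y₀.symm
  have e1 := hg x₀ w₀
  have e2 := hg y₀ w₀
  rw [hgx] at e1
  rw [hgy] at e2
  exact ⟨g w₀, by rw [e1, h₀], by rw [e2, hy₀w₀]⟩

lemma my_descent (hc : G.Connected) {f : V → Bool} (hf : ∀ x y : V, G.Adj x y → f x ≠ f y)
    {δ : ℕ} (hdiam : HasDiameter G δ) :
    ∀ (a : ℕ) (x y z : V), G.dist y z = a →
      2 * δ + 4 ≤ G.dist y z + G.dist x y + G.dist x z →
      RealizesPerimeter G (G.dist y z + G.dist x y + G.dist x z - 2) := by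
  intro a
  induction a using Nat.strong_induction_on with
  | _ a ih =>
    intro x y z ha hbig
    have hbd1 := hdiam.1 y z
    have hbd2 := hdiam.1 x y
    have hbd3 := hdiam.1 x z
    have ha4 : 4 ≤ a := by omega
    obtain ⟨w, hadj, hw⟩ := my_step hc (y := y) (z := z) (by omega)
    have hyw : G.dist y w = 1 := myadj_dist hadj
    have hwy : G.dist w y = 1 := by rw [SimpleGraph.dist_comm]; exact hyw
    have ht1 : G.dist x w ≤ G.dist x y + G.dist y w := hc.dist_triangle
    have ht2 : G.dist x y ≤ G.dist x w + G.dist w y := hc.dist_triangle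
    have hpar : Even (G.dist x w + G.dist w y + G.dist x y) := my_perim_even hc hf x w y
    rw [Nat.even_iff] at hpar
    have hcase : G.dist x w + 1 = G.dist x y ∨ G.dist x w = G.dist x y + 1 := by omega
    rcases hcase with hdown | hup
    · have hxw0 : G.dist x w ≠ 0 := by omega
      have hwz0 : G.dist w z ≠ 0 := by omega
      have hxz0 : G.dist x z ≠ 0 := by omega
      exact ⟨x, w, z, fun h => hxw0 (by rw [h]; simp),
        fun h => hwz0 (by rw [h]; simp), fun h => hxz0 (by rw [h]; simp), by omega⟩
    · have := ih (a - 1) (by omega) x w z (by omega) (by omega)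
      have heq : G.dist w z + G.dist x w + G.dist x z - 2
          = G.dist y z + G.dist x y + G.dist x z - 2 := by omega
      rwa [heq] at this

lemma my_no_big (hc : G.Connected) {f : V → Bool} (hf : ∀ x y : V, G.Adj x y → f x ≠ f y)
    {δ ε : ℕ} (hdiam : HasDiameter G δ)
    (hC0 : IsC0 G δ (2 * (δ + ε) + 2)) :
    ∀ k : ℕ, ¬ RealizesPerimeter G (2 * (δ + ε) + 2 + 2 * k) := by
  intro k
  induction k with
  | zero => simpa using hC0.1.2.2
  | succ k ih =>
    rintro ⟨x, y, z, hxy, hyz, hxz, hsum⟩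
    have h := my_descent hc hf hdiam (G.dist y z) x y z rfl (by omega)
    apply ih
    have : G.dist y z + G.dist x y + G.dist x z - 2 = 2 * (δ + ε) + 2 + 2 * k := by omega
    rwa [this] at h

lemma my_perim_le (hc : G.Connected) {f : V → Bool} (hf : ∀ x y : V, G.Adj x y → f x ≠ f y)
    {δ ε : ℕ} (hdiam : HasDiameter G δ)
    (hC0 : IsC0 G δ (2 * (δ + ε) + 2)) (x y z : V) :
    G.dist x y + G.dist y z + G.dist x z ≤ 2 * (δ + ε) := by
  by_contra hcon
  push_neg at hcon
  have hbd1 := hdiam.1 x y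
  have hbd2 := hdiam.1 y z
  have hbd3 := hdiam.1 x z
  have hxy : x ≠ y := by
    intro h
    have e1 : G.dist x y = 0 := by rw [h]; simp
    have e2 : G.dist x z = G.dist y z := by rw [h]
    omega
  have hyz : y ≠ z := by
    intro h
    have e1 : G.dist y z = 0 := by rw [h]; simp
    have e2 : G.dist x y = G.dist x z := by rw [h]
    omega
  have hxz : x ≠ z := by
    intro h
    have e1 : G.dist x z = 0 := by rw [h]; simp
    omega
  have hev : Even (G.dist x y + G.dist y z + G.dist x z) := my_perim_even hc hf x y z
  rw [Nat.even_iff] at hev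
  obtain ⟨k, hk⟩ : ∃ k, G.dist x y + G.dist y z + G.dist x z = 2 * (δ + ε) + 2 + 2 * k :=
    ⟨(G.dist x y + G.dist y z + G.dist x z - (2 * (δ + ε) + 2)) / 2, by omega⟩
  exact my_no_big hc hf hdiam hC0 k ⟨x, y, z, hxy, hyz, hxz, hk⟩

lemma my_tau_eval {δ ε m : ℕ} (hDe : (δ + ε) % 2 = 0) (hm : m ≤ δ + ε) :
    tauFun δ ε m = if m % 2 = 1 then δ + ε - m else m := by
  unfold tauFun
  have hmin : (min m (δ + ε - m)) % 2 = m % 2 := by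
    rcases Nat.le_total m (δ + ε - m) with h | h
    · rw [min_eq_left h]
    · rw [min_eq_right h]; omega
  simp only [Nat.odd_iff, hmin]

lemma my_raise [DecidableEq V] (hc : G.Connected) (hG : IsMetricallyHomogeneous G)
    {δ : ℕ} (hdiam : HasDiameter G δ)
    (hper : ∀ x y z : V, G.dist x y + G.dist y z + G.dist x z ≤ 2 * δ + 2) :
    ∀ (j : ℕ) (x y z : V), G.dist x y + G.dist y z + G.dist x z = 2 * δ + 2 →
      G.dist y z + j = δ →
      ∃ x' y' z' : V, G.dist x' y' = G.dist x y ∧ G.dist y' z' = δ ∧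
        G.dist x' z' + j = G.dist x z := by
  intro j
  induction j with
  | zero => intro x y z hsum hj; exact ⟨x, y, z, rfl, by omega, by omega⟩
  | succ j ih =>
    intro x y z hsum hj
    have hbd1 := hdiam.1 x y
    have hbd2 := hdiam.1 y z
    have hbd3 := hdiam.1 x z
    have ha0 : G.dist y z ≠ 0 := by
      intro h0
      have hrz : y = z := (hc.dist_eq_zero_iff).mp h0
      have : G.dist x y = G.dist x z := by rw [hrz]
      omega
    obtain ⟨u, hyu, hzu⟩ := my_extension hc hG hdiam (x := y) (y := z) (k := 1) ha0 (by omega)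
    -- hyu : dist y u = dist y z + 1, hzu : dist z u = 1
    have ht : G.dist x z ≤ G.dist x u + G.dist u z := hc.dist_triangle
    have huz : G.dist u z = 1 := by rw [SimpleGraph.dist_comm]; exact hzu
    have hp := hper x y u
    have hxu : G.dist x u + 1 = G.dist x z := by omega
    have : ∃ x' y' z' : V, G.dist x' y' = G.dist x y ∧ G.dist y' z' = δ ∧
        G.dist x' z' + j = G.dist x u := ih x y u (by omega) (by omega)
    obtain ⟨x', y', z', h1, h2, h3⟩ := this
    exact ⟨x', y', z', h1, h2, by omega⟩

lemma my_tri_qq2_eps1 [DecidableEq V] (hc : G.Connected) (hG : IsMetricallyHomogeneous G)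
    {δ : ℕ} (hdiam : HasDiameter G δ)
    (hper : ∀ x y z : V, G.dist x y + G.dist y z + G.dist x z ≤ 2 * δ + 2)
    (hreal : RealizesPerimeter G (2 * δ + 2)) {x y : V} (hxy : G.dist x y = 2) :
    ∃ w : V, G.dist x w = δ ∧ G.dist y w = δ := by
  obtain ⟨a, b, c, hab, hbc, hac, hsum⟩ := hreal
  have hbd1 := hdiam.1 a b
  have hbd2 := hdiam.1 b c
  have hbd3 := hdiam.1 a c
  -- first raise: make dist b c equal δ, keeping dist a b
  obtain ⟨a₁, b₁, c₁, h1, h2, h3⟩ :=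
    my_raise hc hG hdiam hper (δ - G.dist b c) a b c hsum (by omega)
  -- now: dist a₁ b₁ = dist a b, dist b₁ c₁ = δ, dist a₁ c₁ = dist a c - (δ - dist b c)
  have hsum1 : G.dist a₁ b₁ + G.dist b₁ c₁ + G.dist a₁ c₁ = 2 * δ + 2 := by omega
  -- second raise with roles (x,y,z) := (b₁, a₁, c₁)? we want to keep the δ side
  -- keep = dist(X,Y), raise = dist(Y,Z), shrink = dist(X,Z)
  -- X := b₁, Y := c₁, Z := a₁ : keep dist b₁ c₁ = δ, raise dist c₁ a₁, shrink dist b₁ a₁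
  have hc1a1 : G.dist c₁ a₁ = G.dist a₁ c₁ := SimpleGraph.dist_comm
  have hb1a1 : G.dist b₁ a₁ = G.dist a₁ b₁ := SimpleGraph.dist_comm
  have hsum2 : G.dist b₁ c₁ + G.dist c₁ a₁ + G.dist b₁ a₁ = 2 * δ + 2 := by omega
  have hbda1 := hdiam.1 a₁ b₁
  obtain ⟨x₂, y₂, z₂, k1, k2, k3⟩ :=
    my_raise hc hG hdiam hper (δ - G.dist c₁ a₁) b₁ c₁ a₁ hsum2 (by omega)
  -- k1 : dist x₂ y₂ = dist b₁ c₁ = δ, k2 : dist y₂ z₂ = δ, k3 : dist x₂ z₂ = 2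
  have hx2z2 : G.dist x₂ z₂ = 2 := by omega
  have hne : x₂ ≠ z₂ := by
    intro h
    have : G.dist x₂ z₂ = 0 := by rw [h]; simp
    omega
  obtain ⟨g, hg, hgx, hgy⟩ := my_pair_transfer hG hne (by omega : G.dist x y = G.dist x₂ z₂)
  have e1 := hg x₂ y₂
  have e2 := hg z₂ y₂
  rw [hgx] at e1
  rw [hgy] at e2
  refine ⟨g y₂, ?_, ?_⟩
  · rw [e1]; omega
  · rw [e2, SimpleGraph.dist_comm]; exact k2

lemma my_tri_qq2_eps0 (hc : G.Connected) (hG : IsMetricallyHomogeneous G)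
    {δ : ℕ} (hdiam : HasDiameter G δ) (hδ : 3 ≤ δ)
    (hper : ∀ x y z : V, G.dist x y + G.dist y z + G.dist x z ≤ 2 * δ)
    {x y : V} (hxy : G.dist x y = 2) :
    ∃ w : V, G.dist x w = δ - 1 ∧ G.dist y w = δ - 1 := by
  obtain ⟨z, hz1, hz2⟩ := my_geodesic hc 1 (j := 1) x y (by omega)
  obtain ⟨z', hzz'⟩ := my_exists_at hc hG hdiam z (le_refl δ)
  have hzx : G.dist z x = 1 := by rw [SimpleGraph.dist_comm]; exact hz1
  have ht1 : G.dist z z' ≤ G.dist z x + G.dist x z' := hc.dist_triangle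
  have ht2 : G.dist z z' ≤ G.dist z y + G.dist y z' := hc.dist_triangle
  have hp1 := hper x z z'
  have hp2 := hper y z z'
  have hxz : G.dist x z = 1 := hz1
  have hyz : G.dist y z = G.dist z y := SimpleGraph.dist_comm
  refine ⟨z', by omega, by omega⟩

end AuxLemmas

/-- a bipartite metrically homogeneous graph of generic type
with `δ ≡ ε (mod 2)` and `C₀ = 2(δ+ε)+2` is twistable by `τ_ε`. -/
theorem sufficiency_tau_bipartite {V : Type*} (G : SimpleGraph V) (δ ε : ℕ)
    (hδ : 3 ≤ δ) (hε : ε ≤ 1) (hpar : δ % 2 = ε)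
    (hG : IsMetricallyHomogeneous G) (hgen : GenericType G)
    (hbip : IsBipartiteGraph G)
    (hdiam : HasDiameter G δ)
    (hC0 : IsC0 G δ (2 * (δ + ε) + 2)) :
    ∃ H : SimpleGraph V, IsMetricallyHomogeneous H ∧
      ∀ x y : V, x ≠ y → H.dist x y = tauFun δ ε (G.dist x y) := by
  classical
  obtain ⟨f, hf⟩ := hbip
  have hc : G.Connected := hG.1
  have hDe : (δ + ε) % 2 = 0 := by omega
  have hD4 : 4 ≤ δ + ε := by omega
  have hper : ∀ x y z : V, G.dist x y + G.dist y z + G.dist x z ≤ 2 * (δ + ε) :=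
    my_perim_le hc hf hdiam hC0
  have tev : ∀ n : ℕ, n ≤ δ + ε → tauFun δ ε n = if n % 2 = 1 then δ + ε - n else n :=
    fun n hn => my_tau_eval hDe hn
  -- the triangle (q, q, 2)
  have qq2 : ∀ x y : V, G.dist x y = 2 →
      ∃ w : V, G.dist x w = δ + ε - 1 ∧ G.dist y w = δ + ε - 1 := by
    interval_cases ε
    · intro x y hxy
      have hper0 : ∀ x y z : V, G.dist x y + G.dist y z + G.dist x z ≤ 2 * δ := by
        intro a b c; have := hper a b c; omega
      obtain ⟨w, h1, h2⟩ := my_tri_qq2_eps0 hc hG hdiam hδ hper0 hxy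
      exact ⟨w, by omega, by omega⟩
    · intro x y hxy
      have hper1 : ∀ x y z : V, G.dist x y + G.dist y z + G.dist x z ≤ 2 * δ + 2 := by
        intro a b c; have := hper a b c; omega
      have hreal : RealizesPerimeter G (2 * δ + 2) := by
        by_contra h
        have hmem : (2 * δ + 2) ∈ {c' : ℕ | Even c' ∧ 2 * δ < c' ∧ ¬ RealizesPerimeter G c'} :=
          ⟨⟨δ + 1, by ring⟩, by omega, h⟩
        have := hC0.2 hmem
        omega
      obtain ⟨w, h1, h2⟩ := my_tri_qq2_eps1 hc hG hdiam hper1 hreal hxy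
      exact ⟨w, by omega, by omega⟩
  -- the twisted graph
  have Hsymm : Symmetric (fun a b : V => G.dist a b = δ + ε - 1) := by
    intro a b h
    show G.dist b a = δ + ε - 1
    rw [SimpleGraph.dist_comm]
    exact h
  have Hloop : Irreflexive (fun a b : V => G.dist a b = δ + ε - 1) := by
    intro a h
    have h' : G.dist a a = δ + ε - 1 := h
    rw [SimpleGraph.dist_self] at h'
    omega
  set H : SimpleGraph V := ⟨fun a b => G.dist a b = δ + ε - 1, ⟨fun a b h => Hsymm h⟩, ⟨Hloop⟩⟩ with hH
  -- upper bound: walks in H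
  have wlk : ∀ (t : ℕ) (x y : V), tauFun δ ε (G.dist x y) = t →
      ∃ p : H.Walk x y, p.length = t := by
    intro t
    induction t using Nat.strong_induction_on with
    | _ t ih =>
      intro x y ht
      have hmδ := hdiam.1 x y
      by_cases hm0 : G.dist x y = 0
      · have hxy : x = y := hc.dist_eq_zero_iff.mp hm0
        subst hxy
        rw [hm0, tev 0 (by omega)] at ht
        simp at ht
        exact ⟨SimpleGraph.Walk.nil, by simp [← ht]⟩
      by_cases hmq : G.dist x y = δ + ε - 1
      · have hadj : H.Adj x y := hmq
        have ht1 : t = 1 := by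
          rw [tev _ (by omega)] at ht
          rw [if_pos (by omega)] at ht
          omega
        exact ⟨SimpleGraph.Walk.cons hadj SimpleGraph.Walk.nil, by simp [ht1]⟩
      rcases Nat.even_or_odd (G.dist x y) with hev | hod
      · have hev2 := Nat.even_iff.mp hev
        have htm : t = G.dist x y := by
          rw [tev _ (by omega), if_neg (by omega)] at ht; omega
        by_cases hm2 : G.dist x y = 2
        · obtain ⟨w, hw1, hw2⟩ := qq2 x y hm2
          have hadj1 : H.Adj x w := hw1
          have hadj2 : H.Adj w y := by
            show G.dist w y = δ + ε - 1
            rw [SimpleGraph.dist_comm]; exact hw2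
          refine ⟨SimpleGraph.Walk.cons hadj1 (SimpleGraph.Walk.cons hadj2
            SimpleGraph.Walk.nil), by simp; omega⟩
        · obtain ⟨w, hw1, hw2⟩ := my_geodesic hc 2 (j := G.dist x y - 2) x y (by omega)
          obtain ⟨p₁, hp₁⟩ := ih 2 (by omega) x w
            (by rw [hw1, tev 2 (by omega)]; norm_num)
          obtain ⟨p₂, hp₂⟩ := ih (G.dist x y - 2) (by omega) w y
            (by rw [hw2, tev _ (by omega), if_neg (by omega)])
          exact ⟨p₁.append p₂, by rw [SimpleGraph.Walk.length_append]; omega⟩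
      · have hod2 := Nat.odd_iff.mp hod
        have htm : t = δ + ε - G.dist x y := by
          rw [tev _ (by omega), if_pos (by omega)] at ht; omega
        have hm2δ : G.dist x y + 2 ≤ δ := by omega
        obtain ⟨w, hw1, hw2⟩ := my_extension hc hG hdiam (k := 2) hm0 hm2δ
        have hwy : G.dist w y = 2 := by rw [SimpleGraph.dist_comm]; exact hw2
        obtain ⟨p₁, hp₁⟩ := ih (t - 2) (by omega) x w
          (by rw [hw1, tev _ (by omega), if_pos (by omega)]; omega)
        obtain ⟨p₂, hp₂⟩ := ih 2 (by omega) w y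
          (by rw [hwy, tev 2 (by omega)]; norm_num)
        exact ⟨p₁.append p₂, by rw [SimpleGraph.Walk.length_append]; omega⟩
  -- lower bound
  have low : ∀ {x y : V} (p : H.Walk x y), tauFun δ ε (G.dist x y) ≤ p.length := by
    intro x y p
    induction p with
    | nil =>
      rename_i a
      rw [SimpleGraph.dist_self, tev 0 (by omega)]
      simp
    | @cons a b c hadj p ih =>
      have hq : G.dist a b = δ + ε - 1 := hadj
      have ht1 : G.dist a c ≤ G.dist a b + G.dist b c := hc.dist_triangle
      have ht2 : G.dist a b ≤ G.dist a c + G.dist c b := hc.dist_triangle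
      have hcb : G.dist c b = G.dist b c := SimpleGraph.dist_comm
      have hp := hper a b c
      have hparity := Nat.even_iff.mp (my_perim_even hc hf a b c)
      have hbc := hdiam.1 b c
      have hac := hdiam.1 a c
      rw [tev _ (by omega)] at ih ⊢
      simp only [SimpleGraph.Walk.length_cons]
      split_ifs at ih ⊢ <;> omega
  -- distance formula
  have Hdist : ∀ x y : V, H.dist x y = tauFun δ ε (G.dist x y) := by
    intro x y
    obtain ⟨p, hp⟩ := wlk _ x y rfl
    have le1 : H.dist x y ≤ tauFun δ ε (G.dist x y) := hp ▸ SimpleGraph.dist_le p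
    obtain ⟨p₀, hp₀⟩ := (p.reachable).exists_walk_length_eq_dist
    have ge1 : tauFun δ ε (G.dist x y) ≤ H.dist x y := hp₀ ▸ low p₀
    omega
  -- H is connected
  have Hconn : H.Connected := by
    obtain ⟨x₀, y₀, -⟩ := hdiam.2
    haveI : Nonempty V := ⟨x₀⟩
    exact ⟨fun x y => ((wlk _ x y rfl).choose).reachable⟩
  -- injectivity of tau
  have tinj : ∀ m n : ℕ, m ≤ δ → n ≤ δ → tauFun δ ε m = tauFun δ ε n → m = n := by
    intro m n hm hn h
    rw [tev m (by omega), tev n (by omega)] at h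
    split_ifs at h <;> omega
  refine ⟨H, ⟨Hconn, ?_⟩, fun x y _ => Hdist x y⟩
  intro s φ hφ
  have hφ' : ∀ x ∈ s, ∀ y ∈ s, G.dist (φ x) (φ y) = G.dist x y := by
    intro x hx y hy
    have := hφ x hx y hy
    rw [Hdist, Hdist] at this
    exact tinj _ _ (hdiam.1 _ _) (hdiam.1 _ _) this
  obtain ⟨g, hg, hgs⟩ := hG.2 s φ hφ'
  exact ⟨g, fun x y => by rw [Hdist, Hdist, hg], hgs⟩
end

section
/- Let Γ be a metrically homogeneous graph of generic type with diameter δ, and suppose k ≤ i and i + k ≤ δ. Then Γ contains a triangle of type (i, i, 2k), i.e., three vertices with pairwise distances i, i, and 2k. -/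
open SimpleGraph

section AuxLemmas

variable {V : Type*} {G : SimpleGraph V}

private lemma aux_dist_start_le (hconn : G.Connected) {p q : V} (w : G.Walk p q) :
    ∀ j : ℕ, G.dist p (w.getVert j) ≤ j := by
  intro j
  induction j with
  | zero => simp [SimpleGraph.Walk.getVert_zero, SimpleGraph.dist_self]
  | succ j ih =>
    rcases Nat.lt_or_ge j w.length with hj | hj
    · have hadj := w.adj_getVert_succ hj
      have h1 : G.dist (w.getVert j) (w.getVert (j + 1)) = 1 :=
        SimpleGraph.dist_eq_one_iff_adj.mpr hadj
      have h2 := hconn.dist_triangle (u := p) (v := w.getVert j) (w := w.getVert (j + 1))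
      omega
    · rw [w.getVert_of_length_le (by omega)]
      have := SimpleGraph.dist_le w
      omega

private lemma aux_dist_end_le {p q : V} (w : G.Walk p q) :
    ∀ j : ℕ, G.dist (w.getVert j) q ≤ w.length - j := by
  induction w with
  | nil =>
    intro j
    rw [SimpleGraph.Walk.getVert_of_length_le _ (by simp)]
    simp [SimpleGraph.dist_self]
  | cons h pw ih =>
    intro j
    cases j with
    | zero =>
      simpa using SimpleGraph.dist_le (SimpleGraph.Walk.cons h pw)
    | succ j =>
      rw [SimpleGraph.Walk.getVert_cons_succ]
      simpa [SimpleGraph.Walk.length_cons, Nat.succ_sub_succ] using ih j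

private lemma aux_frame_chain (hconn : G.Connected) {p q : V} (w : G.Walk p q) :
    ∀ a b : ℕ, a ≤ b → b ≤ w.length →
      G.dist (w.getVert a) (w.getVert b) ≤ b - a := by
  intro a b hab
  induction b, hab using Nat.le_induction with
  | base => intro _; simp [SimpleGraph.dist_self]
  | succ b hab ih =>
    intro hb
    have h0 := ih (by omega)
    have hadj := w.adj_getVert_succ (by omega : b < w.length)
    have h1 : G.dist (w.getVert b) (w.getVert (b + 1)) = 1 :=
      SimpleGraph.dist_eq_one_iff_adj.mpr hadj
    have h2 := hconn.dist_triangle (u := w.getVert a) (v := w.getVert b)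
      (w := w.getVert (b + 1))
    omega

private lemma aux_frame_dist (hconn : G.Connected) {p q : V} (w : G.Walk p q)
    (hw : w.length = G.dist p q) :
    ∀ a b : ℕ, a ≤ b → b ≤ w.length →
      G.dist (w.getVert a) (w.getVert b) + a = b := by
  intro a b hab hb
  have h1 : G.dist p (w.getVert a) ≤ a := aux_dist_start_le hconn w a
  have h2 : G.dist p (w.getVert b) ≤ b := aux_dist_start_le hconn w b
  have h3 : G.dist (w.getVert b) q ≤ w.length - b := aux_dist_end_le w b
  have h4 := hconn.dist_triangle (u := p) (v := w.getVert b) (w := q)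
  have h5 := hconn.dist_triangle (u := p) (v := w.getVert a) (w := w.getVert b)
  have h6 : G.dist (w.getVert a) (w.getVert b) ≤ b - a :=
    aux_frame_chain hconn w a b hab hb
  omega

end AuxLemmas

/-- in a metrically homogeneous graph of generic type, if
`k ≤ i` and `i + k ≤ δ` then a triangle of type `(i,i,2k)` is realized. -/
theorem realize_i_i_two_k {V : Type*} (G : SimpleGraph V) (δ : ℕ)
    (hG : IsMetricallyHomogeneous G) (hgen : GenericType G)
    (hdiam : HasDiameter G δ)
    (i k : ℕ) (hki : k ≤ i) (hik : i + k ≤ δ) :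
    ∃ x y z : V, G.dist x y = i ∧ G.dist x z = i ∧ G.dist y z = 2 * k := by
  classical
  obtain ⟨hconn, hhom⟩ := hG
  obtain ⟨hCN, -⟩ := hgen
  obtain ⟨-, p, q, hpq⟩ := hdiam
  obtain ⟨w, hw⟩ := hconn.exists_walk_length_eq_dist p q
  have hlen : w.length = δ := by rw [hw, hpq]
  set g : ℕ → V := w.getVert with hgdef
  have frame : ∀ a b : ℕ, a ≤ b → b ≤ δ → G.dist (g a) (g b) + a = b := by
    intro a b hab hb
    rw [hgdef]
    exact aux_frame_dist hconn w hw a b hab (by omega)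
  have fadj : ∀ j : ℕ, j + 1 ≤ δ → G.Adj (g j) (g (j + 1)) := by
    intro j hj
    rw [hgdef]
    exact w.adj_getVert_succ (by omega)
  have hdadj : ∀ u v' : V, G.Adj u v' → G.dist u v' = 1 :=
    fun _ _ h => SimpleGraph.dist_eq_one_iff_adj.mpr h
  -- The key one-point extension lemma, proved by transporting a configuration
  -- built on the diameter geodesic.
  have ISO : ∀ r : ℕ, 1 ≤ r → r + 1 ≤ δ → ∀ y₀ A B : V,
      G.dist y₀ A = r → G.dist y₀ B = r → G.dist A B = 2 →
      ∃ u : V, G.Adj A u ∧ G.Adj B u ∧ G.dist y₀ u = r + 1 := by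
    intro r hr1 hr2 y₀ A B hA hB hAB
    obtain ⟨r', rfl⟩ : ∃ r', r = r' + 1 := ⟨r - 1, by omega⟩
    have h02 : G.dist (g r') (g (r' + 2)) = 2 := by
      have := frame r' (r' + 2) (by omega) (by omega); omega
    obtain ⟨hinf, hind⟩ := hCN (g r') (g (r' + 2)) h02
    obtain ⟨a, ha, b, hb, hab⟩ := hinf.nontrivial
    have hgmid : G.Adj (g r') (g (r' + 1)) := fadj r' (by omega)
    have hgmid2 : G.Adj (g (r' + 1)) (g (r' + 2)) := fadj (r' + 1) (by omega)
    -- choose a common neighbor different from the geodesic midpoint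
    obtain ⟨z', hz'mem, hz'ne⟩ :
        ∃ z' : V, (G.Adj (g r') z' ∧ G.Adj (g (r' + 2)) z') ∧ z' ≠ g (r' + 1) := by
      by_cases hcase : a = g (r' + 1)
      · exact ⟨b, ⟨hb.1, hb.2⟩, by rw [← hcase]; exact fun h => hab h.symm⟩
      · exact ⟨a, ⟨ha.1, ha.2⟩, hcase⟩
    have hd0z : G.dist (g 0) z' = r' + 1 := by
      have t1 := hconn.dist_triangle (u := g 0) (v := g r') (w := z')
      have t2 := hconn.dist_triangle (u := g 0) (v := z') (w := g (r' + 2))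
      have e1 := frame 0 r' (by omega) (by omega)
      have e2 := frame 0 (r' + 2) (by omega) (by omega)
      have e3 : G.dist (g r') z' = 1 := hdadj _ _ hz'mem.1
      have e4 : G.dist z' (g (r' + 2)) = 1 := by
        rw [SimpleGraph.dist_comm]; exact hdadj _ _ hz'mem.2
      omega
    have hdmz : G.dist (g (r' + 1)) z' = 2 := by
      have hne0 : G.dist (g (r' + 1)) z' ≠ 0 := by
        intro h0
        exact hz'ne ((hconn.dist_eq_zero_iff.mp h0).symm)
      have hnadj : ¬ G.Adj (g (r' + 1)) z' :=
        hind (g (r' + 1)) z' ⟨hgmid, hgmid2.symm⟩ hz'mem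
      have hne1 : G.dist (g (r' + 1)) z' ≠ 1 := by
        intro h1
        exact hnadj (SimpleGraph.dist_eq_one_iff_adj.mp h1)
      have t1 := hconn.dist_triangle (u := g (r' + 1)) (v := g r') (w := z')
      have e1 : G.dist (g (r' + 1)) (g r') = 1 := by
        rw [SimpleGraph.dist_comm]; exact hdadj _ _ hgmid
      have e2 : G.dist (g r') z' = 1 := hdadj _ _ hz'mem.1
      omega
    -- distinctness
    have hne01 : g 0 ≠ g (r' + 1) := by
      intro h
      have e := frame 0 (r' + 1) (by omega) (by omega)
      rw [h] at e
      simp [SimpleGraph.dist_self] at e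
    have hne0z : g 0 ≠ z' := by
      intro h
      rw [← h] at hd0z
      simp [SimpleGraph.dist_self] at hd0z
    -- the partial isometry and its extension
    set s : Finset V := {g 0, g (r' + 1), z'} with hs
    set f : V → V := fun v' => if v' = g 0 then y₀ else if v' = g (r' + 1) then A else B
      with hf
    have fval0 : f (g 0) = y₀ := by
      show (if g 0 = g 0 then y₀ else if g 0 = g (r' + 1) then A else B) = y₀
      rw [if_pos rfl]
    have fvalm : f (g (r' + 1)) = A := by
      show (if g (r' + 1) = g 0 then y₀
        else if g (r' + 1) = g (r' + 1) then A else B) = A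
      rw [if_neg (fun h => hne01 h.symm), if_pos rfl]
    have fvalz : f z' = B := by
      show (if z' = g 0 then y₀ else if z' = g (r' + 1) then A else B) = B
      rw [if_neg (fun h => hne0z h.symm), if_neg hz'ne]
    have e0m : G.dist (g 0) (g (r' + 1)) = r' + 1 := by
      have := frame 0 (r' + 1) (by omega) (by omega); omega
    have key : ∀ u' ∈ s, ∀ v' ∈ s, G.dist (f u') (f v') = G.dist u' v' := by
      intro u' hu' v' hv'
      simp only [hs, Finset.mem_insert, Finset.mem_singleton] at hu' hv'
      rcases hu' with rfl | rfl | rfl <;> rcases hv' with rfl | rfl | rfl <;>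
        simp only [fval0, fvalm, fvalz]
      · simp [SimpleGraph.dist_self]
      · rw [hA, e0m]
      · rw [hB, hd0z]
      · rw [SimpleGraph.dist_comm, hA, SimpleGraph.dist_comm, e0m]
      · simp [SimpleGraph.dist_self]
      · rw [hAB, hdmz]
      · rw [SimpleGraph.dist_comm, hB, SimpleGraph.dist_comm, hd0z]
      · rw [SimpleGraph.dist_comm, hAB, SimpleGraph.dist_comm, hdmz]
      · simp [SimpleGraph.dist_self]
    obtain ⟨ψ, hψd, hψs⟩ := hhom s f key
    have hm0 : g 0 ∈ s := by simp [hs]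
    have hmm : g (r' + 1) ∈ s := by simp [hs]
    have hmz : z' ∈ s := by simp [hs]
    have hψ0 : ψ (g 0) = y₀ := by rw [hψs _ hm0, fval0]
    have hψm : ψ (g (r' + 1)) = A := by rw [hψs _ hmm, fvalm]
    have hψz : ψ z' = B := by rw [hψs _ hmz, fvalz]
    refine ⟨ψ (g (r' + 2)), ?_, ?_, ?_⟩
    · have e := hψd (g (r' + 1)) (g (r' + 2))
      rw [hψm] at e
      rw [hdadj _ _ hgmid2] at e
      exact SimpleGraph.dist_eq_one_iff_adj.mp e
    · have e := hψd z' (g (r' + 2))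
      rw [hψz] at e
      have e4 : G.dist z' (g (r' + 2)) = 1 := by
        rw [SimpleGraph.dist_comm]; exact hdadj _ _ hz'mem.2
      rw [e4] at e
      exact SimpleGraph.dist_eq_one_iff_adj.mp e
    · have e := hψd (g 0) (g (r' + 2))
      rw [hψ0] at e
      have e2 := frame 0 (r' + 2) (by omega) (by omega)
      omega
  -- the double induction building the diverging chains
  have main : ∀ t : ℕ, t ≤ k → ∃ w' : ℕ → V, w' 0 = g (i + t) ∧
      (∀ c : ℕ, c ≤ k → G.dist (g 0) (w' c) + c = i + t) ∧
      (∀ c : ℕ, c ≤ k → G.dist (g i) (w' c) = t + c) ∧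
      (∀ c : ℕ, c + 1 ≤ k → G.Adj (w' c) (w' (c + 1))) := by
    intro t
    induction t with
    | zero =>
      intro _
      refine ⟨fun c => g (i - c), by simp, ?_, ?_, ?_⟩
      · intro c hc
        show G.dist (g 0) (g (i - c)) + c = i + 0
        have := frame 0 (i - c) (by omega) (by omega)
        omega
      · intro c hc
        show G.dist (g i) (g (i - c)) = 0 + c
        have e := frame (i - c) i (by omega) (by omega)
        have hcomm : G.dist (g i) (g (i - c)) = G.dist (g (i - c)) (g i) :=
          SimpleGraph.dist_comm
        omega
      · intro c hc
        show G.Adj (g (i - c)) (g (i - (c + 1)))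
        have hi : i - (c + 1) + 1 = i - c := by omega
        have h := fadj (i - (c + 1)) (by omega)
        rw [hi] at h
        exact h.symm
    | succ t ih =>
      intro ht1
      obtain ⟨w', hw0, hA, hB, hC⟩ := ih (by omega)
      have inner : ∀ m : ℕ, m ≤ k → ∃ w2 : ℕ → V, w2 0 = g (i + (t + 1)) ∧
          (∀ c : ℕ, c ≤ m → (G.dist (g 0) (w2 c) + c = i + (t + 1)) ∧
            G.dist (g i) (w2 c) = (t + 1) + c ∧ (1 ≤ c → G.Adj (w' c) (w2 c))) ∧
          (∀ c : ℕ, c + 1 ≤ m → G.Adj (w2 c) (w2 (c + 1))) := by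
        intro m
        induction m with
        | zero =>
          intro _
          refine ⟨fun _ => g (i + (t + 1)), rfl, ?_, ?_⟩
          · intro c hc
            have hc0 : c = 0 := by omega
            subst hc0
            show (G.dist (g 0) (g (i + (t + 1))) + 0 = i + (t + 1)) ∧
              G.dist (g i) (g (i + (t + 1))) = (t + 1) + 0 ∧
              (1 ≤ 0 → G.Adj (w' 0) (g (i + (t + 1))))
            have e1 := frame 0 (i + (t + 1)) (by omega) (by omega)
            have e2 := frame i (i + (t + 1)) (by omega) (by omega)
            exact ⟨by omega, by omega, fun h => absurd h (by omega)⟩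
          · intro c hc
            exact absurd hc (by omega)
        | succ m ihm =>
          intro hm1
          obtain ⟨w2, h20, h2inv, h2chain⟩ := ihm (by omega)
          have hxA : G.dist (g 0) (w2 m) + m = i + (t + 1) := (h2inv m le_rfl).1
          have hyA : G.dist (g i) (w2 m) = t + 1 + m := (h2inv m le_rfl).2.1
          have hxB : G.dist (g 0) (w' (m + 1)) + (m + 1) = i + t := hA (m + 1) (by omega)
          have hyB : G.dist (g i) (w' (m + 1)) = t + (m + 1) := hB (m + 1) (by omega)
          have hcomm : G.dist (w' (m + 1)) (w2 m) = G.dist (w2 m) (w' (m + 1)) :=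
            SimpleGraph.dist_comm
          have hABle : G.dist (w2 m) (w' (m + 1)) ≤ 2 := by
            rcases Nat.eq_zero_or_pos m with rfl | hmpos
            · have e1 : G.Adj (w2 0) (w' 0) := by
                rw [h20, hw0]
                exact (fadj (i + t) (by omega)).symm
              have e2 : G.Adj (w' 0) (w' (0 + 1)) := hC 0 (by omega)
              have t1 := hconn.dist_triangle (u := w2 0) (v := w' 0) (w := w' (0 + 1))
              have d1 := hdadj _ _ e1
              have d2 := hdadj _ _ e2
              omega
            · have e1 : G.Adj (w' m) (w2 m) := (h2inv m le_rfl).2.2 hmpos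
              have e2 : G.Adj (w' m) (w' (m + 1)) := hC m (by omega)
              have t1 := hconn.dist_triangle (u := w2 m) (v := w' m) (w := w' (m + 1))
              have d1 : G.dist (w2 m) (w' m) = 1 := by
                rw [SimpleGraph.dist_comm]; exact hdadj _ _ e1
              have d2 := hdadj _ _ e2
              omega
          have hAB : G.dist (w2 m) (w' (m + 1)) = 2 := by
            have t1 := hconn.dist_triangle (u := g 0) (v := w' (m + 1)) (w := w2 m)
            omega
          obtain ⟨u, huA, huB, huy⟩ :=
            ISO (t + 1 + m) (by omega) (by omega) (g i) (w2 m) (w' (m + 1))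
              hyA (by omega) hAB
          have hxu : G.dist (g 0) u + (m + 1) = i + (t + 1) := by
            have t1 := hconn.dist_triangle (u := g 0) (v := u) (w := w2 m)
            have t2 := hconn.dist_triangle (u := g 0) (v := w' (m + 1)) (w := u)
            have d1 : G.dist u (w2 m) = 1 := by
              rw [SimpleGraph.dist_comm]; exact hdadj _ _ huA
            have d2 : G.dist (w' (m + 1)) u = 1 := hdadj _ _ huB
            omega
          refine ⟨fun c => if c = m + 1 then u else w2 c, ?_, ?_, ?_⟩
          · show (if 0 = m + 1 then u else w2 0) = g (i + (t + 1))
            rw [if_neg (by omega), h20]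
          · intro c hc
            rcases Nat.lt_or_ge c (m + 1) with hlt | hge
            · show (G.dist (g 0) (if c = m + 1 then u else w2 c) + c = i + (t + 1)) ∧
                G.dist (g i) (if c = m + 1 then u else w2 c) = (t + 1) + c ∧
                (1 ≤ c → G.Adj (w' c) (if c = m + 1 then u else w2 c))
              rw [if_neg (by omega)]
              exact h2inv c (by omega)
            · have hceq : c = m + 1 := by omega
              subst hceq
              show (G.dist (g 0) (if m + 1 = m + 1 then u else w2 (m + 1)) + (m + 1)
                  = i + (t + 1)) ∧
                G.dist (g i) (if m + 1 = m + 1 then u else w2 (m + 1)) = (t + 1) + (m + 1) ∧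
                (1 ≤ m + 1 → G.Adj (w' (m + 1)) (if m + 1 = m + 1 then u else w2 (m + 1)))
              rw [if_pos rfl]
              exact ⟨hxu, by omega, fun _ => huB⟩
          · intro c hc
            rcases Nat.lt_or_ge (c + 1) (m + 1) with hlt | hge
            · show G.Adj (if c = m + 1 then u else w2 c)
                (if c + 1 = m + 1 then u else w2 (c + 1))
              rw [if_neg (by omega), if_neg (by omega)]
              exact h2chain c (by omega)
            · have hceq : c = m := by omega
              subst hceq
              show G.Adj (if c = c + 1 then u else w2 c)
                (if c + 1 = c + 1 then u else w2 (c + 1))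
              rw [if_neg (by omega), if_pos rfl]
              exact huA
      obtain ⟨w2, h20, h2inv, h2chain⟩ := inner k le_rfl
      exact ⟨w2, h20, fun c hc => (h2inv c hc).1, fun c hc => (h2inv c hc).2.1, h2chain⟩
  obtain ⟨w', hw0, hA, hB, hC⟩ := main k le_rfl
  refine ⟨g 0, g i, w' k, ?_, ?_, ?_⟩
  · have := frame 0 i (by omega) (by omega)
    omega
  · have := hA k le_rfl
    omega
  · have := hB k le_rfl
    omega
end
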